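/- arXiv:1402.5190 — 4 statements merged into one kernel-verified Lean document; each statement's English description precedes it below -/
import Mathlib

section
/- Assume the subset LCM assumption: for every F ⊂ I and j ∈ F^c, E(x_j | X_F) = E(x_j X_Fᵀ)Σ_F^{-1}X_F almost surely. Then for any F ⊂ I and j ∈ F^c, trace(M^SIR_{F∪{j}}) − trace(M^SIR_F) = Σ_{h=1}^H p_h γ_{j|F,h}². -/
open MeasureTheory ProbabilityTheory Matrix Filter Finset
open scoped BigOperators ENNReal

noncomputable section

namespace TracePursuit

variable {Ω : Type*}

/-- Second-moment (= covariance, under mean zero) matrix of the coordinates of `X` in `F`. -/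
def covM [MeasurableSpace Ω] (μ : Measure Ω) {p : ℕ} (X : Ω → Fin p → ℝ)
    (F : Finset (Fin p)) : Matrix F F ℝ :=
  Matrix.of fun i j => ∫ ω, X ω i.1 * X ω j.1 ∂μ

/-- Slice probability `p_h = P(Y ∈ J_h)`. -/
def sliceP [MeasurableSpace Ω] (μ : Measure Ω) {H : ℕ} (Y : Ω → ℝ)
    (J : Fin H → Set ℝ) (h : Fin H) : ℝ :=
  (μ (Y ⁻¹' J h)).toReal

/-- Slice mean vector `U_{F,h} = E(X_F | Y ∈ J_h)`. -/
def sliceU [MeasurableSpace Ω] (μ : Measure Ω) {p H : ℕ} (X : Ω → Fin p → ℝ)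
    (Y : Ω → ℝ) (J : Fin H → Set ℝ) (F : Finset (Fin p)) (h : Fin H) : F → ℝ :=
  fun i => (∫ ω in Y ⁻¹' J h, X ω i.1 ∂μ) / sliceP μ Y J h

/-- Slice second-moment matrix `V_{F,h} = E(X_F X_Fᵀ | Y ∈ J_h)`. -/
def sliceV [MeasurableSpace Ω] (μ : Measure Ω) {p H : ℕ} (X : Ω → Fin p → ℝ)
    (Y : Ω → ℝ) (J : Fin H → Set ℝ) (F : Finset (Fin p)) (h : Fin H) : Matrix F F ℝ :=
  Matrix.of fun i j => (∫ ω in Y ⁻¹' J h, X ω i.1 * X ω j.1 ∂μ) / sliceP μ Y J h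

/-- The SIR kernel matrix `M^SIR_F = Σ_F^{-1/2} (Σ_h p_h U_{F,h} U_{F,h}ᵀ) Σ_F^{-1/2}`,
where `S` is the inverse square root `Σ_F^{-1/2}`. -/
def MSIR [MeasurableSpace Ω] (μ : Measure Ω) {p H : ℕ} (X : Ω → Fin p → ℝ)
    (Y : Ω → ℝ) (J : Fin H → Set ℝ) (F : Finset (Fin p)) (S : Matrix F F ℝ) :
    Matrix F F ℝ :=
  S * (∑ h, sliceP μ Y J h • vecMulVec (sliceU μ X Y J F h) (sliceU μ X Y J F h)) * S

/-- The SAVE kernel matrix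
`M^SAVE_F = Σ_h p_h (Σ_F^{-1/2}(Σ_F - V_{F,h} + U_{F,h}U_{F,h}ᵀ)Σ_F^{-1/2})²`. -/
def MSAVE [MeasurableSpace Ω] (μ : Measure Ω) {p H : ℕ} (X : Ω → Fin p → ℝ)
    (Y : Ω → ℝ) (J : Fin H → Set ℝ) (F : Finset (Fin p)) (S : Matrix F F ℝ) :
    Matrix F F ℝ :=
  ∑ h, sliceP μ Y J h •
    (S * (covM μ X F - sliceV μ X Y J F h
        + vecMulVec (sliceU μ X Y J F h) (sliceU μ X Y J F h)) * S) ^ 2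

/-- `κ_F = Σ_h p_h U_{F,h}ᵀ Σ_F⁻¹ U_{F,h}`. -/
def kappaF [MeasurableSpace Ω] (μ : Measure Ω) {p H : ℕ} (X : Ω → Fin p → ℝ)
    (Y : Ω → ℝ) (J : Fin H → Set ℝ) (F : Finset (Fin p)) : ℝ :=
  ∑ h, sliceP μ Y J h *
    (sliceU μ X Y J F h ⬝ᵥ (covM μ X F)⁻¹.mulVec (sliceU μ X Y J F h))

/-- The directional-regression kernel matrix `M^DR_F`. -/
def MDR [MeasurableSpace Ω] (μ : Measure Ω) {p H : ℕ} (X : Ω → Fin p → ℝ)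
    (Y : Ω → ℝ) (J : Fin H → Set ℝ) (F : Finset (Fin p)) (S : Matrix F F ℝ) :
    Matrix F F ℝ :=
  (2 : ℝ) • (∑ h, sliceP μ Y J h • (S * sliceV μ X Y J F h * S) ^ 2)
  + (2 : ℝ) • (∑ h, sliceP μ Y J h •
      (S * vecMulVec (sliceU μ X Y J F h) (sliceU μ X Y J F h) * S)) ^ 2
  + (2 : ℝ) • (kappaF μ X Y J F •
      (∑ h, sliceP μ Y J h •
        (S * vecMulVec (sliceU μ X Y J F h) (sliceU μ X Y J F h) * S)))
  - (2 : ℝ) • (1 : Matrix F F ℝ)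

/-- The σ-algebra generated by `X_F`. -/
def mF [MeasurableSpace Ω] {p : ℕ} (X : Ω → Fin p → ℝ) (F : Finset (Fin p)) :
    MeasurableSpace Ω :=
  MeasurableSpace.comap (fun ω => fun i : F => X ω i.1) inferInstance

/-- `θ_{j|F} = Σ_F⁻¹ E(x_j X_F)`. -/
def thetaJF [MeasurableSpace Ω] (μ : Measure Ω) {p : ℕ} (X : Ω → Fin p → ℝ)
    (F : Finset (Fin p)) (j : Fin p) : F → ℝ :=
  (covM μ X F)⁻¹.mulVec fun i => ∫ ω, X ω j * X ω i.1 ∂μ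

/-- The subset linear conditional mean assumption:
for every `F ⊂ I` and `j ∈ Fᶜ`, `E(x_j | X_F) = E(x_j X_Fᵀ) Σ_F⁻¹ X_F` a.s. -/
def SubsetLCM [MeasurableSpace Ω] (μ : Measure Ω) {p : ℕ} (X : Ω → Fin p → ℝ) : Prop :=
  ∀ (F : Finset (Fin p)) (j : Fin p), j ∉ F →
    (μ[fun ω => X ω j | mF X F]) =ᵐ[μ] fun ω => ∑ i : F, thetaJF μ X F j i * X ω i.1

/-- The subset constant conditional variance assumption:
for every `F ⊂ I` and `j ∈ Fᶜ`, `var(x_j | X_F)` is a.s. constant. -/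
def SubsetCCV [MeasurableSpace Ω] (μ : Measure Ω) {p : ℕ} (X : Ω → Fin p → ℝ) : Prop :=
  ∀ (F : Finset (Fin p)) (j : Fin p), j ∉ F → ∃ c : ℝ,
    (fun ω => (μ[fun ω' => X ω' j ^ 2 | mF X F]) ω - ((μ[fun ω' => X ω' j | mF X F]) ω) ^ 2)
      =ᵐ[μ] fun _ => c

/-- The residual `x_{j|F} = x_j - E(x_j | X_F)`. -/
def xres [MeasurableSpace Ω] (μ : Measure Ω) {p : ℕ} (X : Ω → Fin p → ℝ)
    (F : Finset (Fin p)) (j : Fin p) : Ω → ℝ :=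
  fun ω => X ω j - (μ[fun ω' => X ω' j | mF X F]) ω

/-- Variance of a real function. -/
def varF [MeasurableSpace Ω] (μ : Measure Ω) (f : Ω → ℝ) : ℝ :=
  ∫ ω, f ω ^ 2 ∂μ - (∫ ω, f ω ∂μ) ^ 2

/-- `σ²_{j|F} = var(x_{j|F})`. -/
def sigma2 [MeasurableSpace Ω] (μ : Measure Ω) {p : ℕ} (X : Ω → Fin p → ℝ)
    (F : Finset (Fin p)) (j : Fin p) : ℝ :=
  varF μ (xres μ X F j)

/-- `γ_{j|F} = x_{j|F}/σ_{j|F}`. -/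
def gammaRes [MeasurableSpace Ω] (μ : Measure Ω) {p : ℕ} (X : Ω → Fin p → ℝ)
    (F : Finset (Fin p)) (j : Fin p) : Ω → ℝ :=
  fun ω => xres μ X F j ω / Real.sqrt (sigma2 μ X F j)

/-- `γ_{j|F,h} = E(γ_{j|F} | Y ∈ J_h)`. -/
def gammaH [MeasurableSpace Ω] (μ : Measure Ω) {p H : ℕ} (X : Ω → Fin p → ℝ)
    (Y : Ω → ℝ) (J : Fin H → Set ℝ) (F : Finset (Fin p)) (j : Fin p) (h : Fin H) : ℝ :=
  (∫ ω in Y ⁻¹' J h, gammaRes μ X F j ω ∂μ) / sliceP μ Y J h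

/-- `ζ_{j|F,h} = E(γ_{j|F}² | Y ∈ J_h)`. -/
def zetaH [MeasurableSpace Ω] (μ : Measure Ω) {p H : ℕ} (X : Ω → Fin p → ℝ)
    (Y : Ω → ℝ) (J : Fin H → Set ℝ) (F : Finset (Fin p)) (j : Fin p) (h : Fin H) : ℝ :=
  (∫ ω in Y ⁻¹' J h, gammaRes μ X F j ω ^ 2 ∂μ) / sliceP μ Y J h

/-- `E(X_F γ_{j|F} | Y ∈ J_h)`. -/
def sliceXGamma [MeasurableSpace Ω] (μ : Measure Ω) {p H : ℕ} (X : Ω → Fin p → ℝ)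
    (Y : Ω → ℝ) (J : Fin H → Set ℝ) (F : Finset (Fin p)) (j : Fin p) (h : Fin H) : F → ℝ :=
  fun i => (∫ ω in Y ⁻¹' J h, X ω i.1 * gammaRes μ X F j ω ∂μ) / sliceP μ Y J h

/-- `φ_{j|F,h} = Σ_F^{-1/2} (U_{F,h} γ_{j|F,h} - E(X_F γ_{j|F} | Y ∈ J_h))`. -/
def phiH [MeasurableSpace Ω] (μ : Measure Ω) {p H : ℕ} (X : Ω → Fin p → ℝ)
    (Y : Ω → ℝ) (J : Fin H → Set ℝ) (F : Finset (Fin p)) (S : Matrix F F ℝ)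
    (j : Fin p) (h : Fin H) : F → ℝ :=
  S.mulVec fun i => sliceU μ X Y J F h i * gammaH μ X Y J F j h
    - sliceXGamma μ X Y J F j h i

/-- `ν_{j|F,h} = Σ_F^{-1/2} E(X_F γ_{j|F} | Y ∈ J_h)`. -/
def nuH [MeasurableSpace Ω] (μ : Measure Ω) {p H : ℕ} (X : Ω → Fin p → ℝ)
    (Y : Ω → ℝ) (J : Fin H → Set ℝ) (F : Finset (Fin p)) (S : Matrix F F ℝ)
    (j : Fin p) (h : Fin H) : F → ℝ :=
  S.mulVec (sliceXGamma μ X Y J F j h)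

/-- `ι_{j|F,h} = Σ_F^{-1/2} U_{F,h} γ_{j|F,h}`. -/
def iotaH [MeasurableSpace Ω] (μ : Measure Ω) {p H : ℕ} (X : Ω → Fin p → ℝ)
    (Y : Ω → ℝ) (J : Fin H → Set ℝ) (F : Finset (Fin p)) (S : Matrix F F ℝ)
    (j : Fin p) (h : Fin H) : F → ℝ :=
  gammaH μ X Y J F j h • S.mulVec (sliceU μ X Y J F h)

/-- `ι_{j|F} = Σ_h p_h ι_{j|F,h}`. -/
def iotaSum [MeasurableSpace Ω] (μ : Measure Ω) {p H : ℕ} (X : Ω → Fin p → ℝ)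
    (Y : Ω → ℝ) (J : Fin H → Set ℝ) (F : Finset (Fin p)) (S : Matrix F F ℝ)
    (j : Fin p) : F → ℝ :=
  ∑ h, sliceP μ Y J h • iotaH μ X Y J F S j h

/-- `ϱ_{j|F} = Σ_h p_h γ_{j|F,h}²`. -/
def rhoJF [MeasurableSpace Ω] (μ : Measure Ω) {p H : ℕ} (X : Ω → Fin p → ℝ)
    (Y : Ω → ℝ) (J : Fin H → Set ℝ) (F : Finset (Fin p)) (j : Fin p) : ℝ :=
  ∑ h, sliceP μ Y J h * gammaH μ X Y J F j h ^ 2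

/-- `{J_h}` is a measurable partition of the sample space of `Y`. -/
def IsSlicePartition {H : ℕ} (J : Fin H → Set ℝ) : Prop :=
  (∀ h, MeasurableSet (J h)) ∧ Pairwise (Function.onFun Disjoint J) ∧ (⋃ h, J h) = Set.univ

/-- `S` is a symmetric inverse square root of `Sig`, i.e. `S = Σ'^{-1/2}`. -/
def IsInvSqrt {n : Type*} [Fintype n] [DecidableEq n] (S Sig : Matrix n n ℝ) : Prop :=
  S.IsSymm ∧ S * S = Sig⁻¹

end TracePursuit

namespace SirAux
open TracePursuit

variable {Ω : Type*} [m0 : MeasurableSpace Ω]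

/-- second moment function -/
def m2 (μ : Measure Ω) {p : ℕ} (X : Ω → Fin p → ℝ) (a b : Fin p) : ℝ :=
  ∫ ω, X ω a * X ω b ∂μ

/-- extension of θ to `Fin p` by zero -/
def thp (μ : Measure Ω) {p : ℕ} (X : Ω → Fin p → ℝ) (F : Finset (Fin p)) (j : Fin p)
    (a : Fin p) : ℝ :=
  if h : a ∈ F then thetaJF μ X F j ⟨a, h⟩ else 0

/-- coefficient vector of the residual -/
def cp (μ : Measure Ω) {p : ℕ} (X : Ω → Fin p → ℝ) (F : Finset (Fin p)) (j : Fin p)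
    (a : Fin p) : ℝ :=
  if a = j then 1 else -thp μ X F j a

/-- explicit residual -/
def rr (μ : Measure Ω) {p : ℕ} (X : Ω → Fin p → ℝ) (F : Finset (Fin p)) (j : Fin p)
    (ω : Ω) : ℝ :=
  X ω j - ∑ a ∈ F, thp μ X F j a * X ω a

lemma aux_int_mul {μ : Measure Ω} [IsProbabilityMeasure μ]
    {f g : Ω → ℝ} (hf : MeasureTheory.MemLp f 2 μ) (hg : MeasureTheory.MemLp g 2 μ) :
    MeasureTheory.Integrable (fun ω => f ω * g ω) μ := by
  have h1 : MeasureTheory.MemLp (f • g) 1 μ := MeasureTheory.MemLp.smul (r := 1) hg hf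
  exact MeasureTheory.memLp_one_iff_integrable.mp h1

lemma aux_trace_vecMulVec {n : Type*} [Fintype n] (A : Matrix n n ℝ) (u : n → ℝ) :
    (A * Matrix.vecMulVec u u).trace = u ⬝ᵥ A.mulVec u := by
  simp only [Matrix.trace, Matrix.diag, Matrix.mul_apply, Matrix.vecMulVec_apply,
    dotProduct, Matrix.mulVec, dotProduct, Finset.mul_sum]
  congr 1; ext i; congr 1; ext k; ring

lemma trace_MSIR (μ : Measure Ω) {p H : ℕ} (X : Ω → Fin p → ℝ)
    (Y : Ω → ℝ) (J : Fin H → Set ℝ) (F : Finset (Fin p)) (S : Matrix F F ℝ)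
    (hS : IsInvSqrt S (covM μ X F)) :
    (MSIR μ X Y J F S).trace = ∑ h, sliceP μ Y J h *
      (sliceU μ X Y J F h ⬝ᵥ ((covM μ X F)⁻¹).mulVec (sliceU μ X Y J F h)) := by
  unfold MSIR
  rw [Matrix.trace_mul_cycle, hS.2, Matrix.mul_sum, Matrix.trace_sum]
  congr 1; ext h
  rw [Matrix.mul_smul, Matrix.trace_smul, aux_trace_vecMulVec, smul_eq_mul]

end SirAux
namespace SirAux
open MeasureTheory

section
variable {Ω : Type*} [m0 : MeasurableSpace Ω] {μ : MeasureTheory.Measure Ω}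
  [MeasureTheory.IsProbabilityMeasure μ] {p : ℕ} {X : Ω → Fin p → ℝ}
  {F : Finset (Fin p)} {j : Fin p}

lemma memL2 (hmom : ∀ i, MemLp (fun ω => X ω i) 4 μ) (a : Fin p) :
    MemLp (fun ω => X ω a) 2 μ :=
  (hmom a).mono_exponent (by norm_num)

lemma int1 (hmom : ∀ i, MemLp (fun ω => X ω i) 4 μ) (a : Fin p) :
    Integrable (fun ω => X ω a) μ :=
  memLp_one_iff_integrable.mp ((hmom a).mono_exponent (by norm_num))

lemma int2 (hmom : ∀ i, MemLp (fun ω => X ω i) 4 μ) (a b : Fin p) :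
    Integrable (fun ω => X ω a * X ω b) μ :=
  aux_int_mul (memL2 hmom a) (memL2 hmom b)

lemma intr (hmom : ∀ i, MemLp (fun ω => X ω i) 4 μ) :
    Integrable (rr μ X F j) μ := by
  unfold rr
  exact (int1 hmom j).sub
    (integrable_finset_sum _ fun a _ => (int1 hmom a).const_mul _)

lemma xa_rr_eq (a : Fin p) : (fun ω => X ω a * rr μ X F j ω)
    = fun ω => X ω a * X ω j - ∑ b ∈ F, thp μ X F j b * (X ω a * X ω b) := by
  funext ω
  simp only [rr, mul_sub, Finset.mul_sum]
  congr 1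
  exact Finset.sum_congr rfl fun b _ => by ring

lemma intar (hmom : ∀ i, MemLp (fun ω => X ω i) 4 μ) (a : Fin p) :
    Integrable (fun ω => X ω a * rr μ X F j ω) μ := by
  rw [xa_rr_eq]
  exact (int2 hmom a j).sub
    (integrable_finset_sum _ fun b _ => (int2 hmom a b).const_mul _)

lemma rr_sq_eq : (fun ω => rr μ X F j ω ^ 2)
    = fun ω => X ω j * rr μ X F j ω
      - ∑ b ∈ F, thp μ X F j b * (X ω b * rr μ X F j ω) := by
  funext ω
  have : ∑ b ∈ F, thp μ X F j b * (X ω b * rr μ X F j ω)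
      = (∑ b ∈ F, thp μ X F j b * X ω b) * rr μ X F j ω := by
    rw [Finset.sum_mul]; exact Finset.sum_congr rfl fun b _ => by ring
  rw [this, sq]
  have hr : rr μ X F j ω = X ω j - ∑ a ∈ F, thp μ X F j a * X ω a := rfl
  nth_rewrite 1 [hr]
  ring

lemma intr2 (hmom : ∀ i, MemLp (fun ω => X ω i) 4 μ) :
    Integrable (fun ω => rr μ X F j ω ^ 2) μ := by
  rw [rr_sq_eq]
  exact (intar hmom j).sub
    (integrable_finset_sum _ fun b _ => (intar hmom b).const_mul _)

lemma int_rr (hmom : ∀ i, MemLp (fun ω => X ω i) 4 μ)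
    (hmean : ∀ i, ∫ ω, X ω i ∂μ = 0) :
    ∫ ω, rr μ X F j ω ∂μ = 0 := by
  unfold rr
  rw [integral_sub (int1 hmom j)
    (integrable_finset_sum _ fun a _ => (int1 hmom a).const_mul _),
    integral_finset_sum _ fun a _ => (int1 hmom a).const_mul _]
  simp [integral_const_mul, hmean]

lemma int_ar (hmom : ∀ i, MemLp (fun ω => X ω i) 4 μ) (a : Fin p) :
    ∫ ω, X ω a * rr μ X F j ω ∂μ
      = m2 μ X a j - ∑ k ∈ F, thp μ X F j k * m2 μ X a k := by
  rw [xa_rr_eq]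
  rw [integral_sub (int2 hmom a j)
    (integrable_finset_sum _ fun b _ => (int2 hmom a b).const_mul _),
    integral_finset_sum _ fun b _ => (int2 hmom a b).const_mul _]
  simp only [integral_const_mul]
  rfl

end
end SirAux
set_option linter.unusedSectionVars false
namespace SirAux
open TracePursuit MeasureTheory Matrix Finset

section
variable {Ω : Type*} [m0 : MeasurableSpace Ω] {μ : MeasureTheory.Measure Ω}
  [MeasureTheory.IsProbabilityMeasure μ] {p : ℕ} {X : Ω → Fin p → ℝ}
  {F : Finset (Fin p)} {j : Fin p}

lemma covM_apply (a b : F) : covM μ X F a b = m2 μ X a.1 b.1 := rfl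

lemma m2_comm (a b : Fin p) : m2 μ X a b = m2 μ X b a :=
  integral_congr_ae (Filter.Eventually.of_forall fun ω => mul_comm _ _)

lemma covM_symm : (covM μ X F)ᵀ = covM μ X F := by
  ext a b
  exact m2_comm b.1 a.1

lemma covM_posDef (hpos : (covM μ X Finset.univ).PosDef) : (covM μ X F).PosDef := by
  refine posDef_iff_dotProduct_mulVec.mpr ⟨?_, ?_⟩
  · ext a b
    simp only [conjTranspose_apply, star_trivial]
    exact m2_comm b.1 a.1
  · intro v hv
    set v' : Fin p → ℝ := fun a => if h : a ∈ F then v ⟨a, h⟩ else 0 with hv'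
    set w : ↥(Finset.univ : Finset (Fin p)) → ℝ := fun i => v' i.1 with hwdef
    have hvv : ∀ i : ↥F, v i = v' i.1 := fun i => by simp [hv', i.2]
    have hv0 : ∀ a, a ∉ F → v' a = 0 := fun a ha => by simp [hv', ha]
    have hw0 : w ≠ 0 := by
      obtain ⟨i, hi⟩ := Function.ne_iff.mp hv
      apply Function.ne_iff.mpr
      refine ⟨⟨i.1, Finset.mem_univ _⟩, ?_⟩
      simpa [hwdef, hv', i.2] using hi
    have hinner : ∀ a : Fin p, (∑ b ∈ F, m2 μ X a b * v' b)
        = ∑ b ∈ Finset.univ, m2 μ X a b * v' b := fun a =>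
      Finset.sum_subset (Finset.subset_univ F) (fun b _ hb => by rw [hv0 b hb, mul_zero])
    have key : star v ⬝ᵥ (covM μ X F).mulVec v
        = star w ⬝ᵥ (covM μ X Finset.univ).mulVec w := by
      calc star v ⬝ᵥ (covM μ X F).mulVec v
          = ∑ a : F, v' a.1 * ∑ b ∈ F, m2 μ X a.1 b * v' b := by
            simp only [star_trivial, dotProduct, mulVec, covM_apply]
            refine Finset.sum_congr rfl fun a _ => ?_
            rw [hvv a]
            congr 1
            rw [← Finset.sum_coe_sort F (fun b => m2 μ X a.1 b * v' b)]
            exact Finset.sum_congr rfl fun b _ => by rw [hvv b]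
        _ = ∑ a ∈ F, v' a * ∑ b ∈ F, m2 μ X a b * v' b :=
            Finset.sum_coe_sort F (fun a => v' a * ∑ b ∈ F, m2 μ X a b * v' b)
        _ = ∑ a ∈ Finset.univ, v' a * ∑ b ∈ Finset.univ, m2 μ X a b * v' b := by
            simp_rw [hinner]
            exact Finset.sum_subset (Finset.subset_univ F)
              (fun a _ ha => by rw [hv0 a ha, zero_mul])
        _ = star w ⬝ᵥ (covM μ X Finset.univ).mulVec w := by
            simp only [star_trivial, dotProduct, mulVec, covM_apply, hwdef]
            rw [← Finset.sum_coe_sort Finset.univ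
              (fun a => v' a * ∑ b ∈ Finset.univ, m2 μ X a b * v' b)]
            refine Finset.sum_congr rfl fun a _ => ?_
            congr 1
            exact (Finset.sum_coe_sort Finset.univ
              (fun b => m2 μ X a.1 b * v' b)).symm
    rw [key]
    exact hpos.dotProduct_mulVec_pos hw0

lemma covM_det (hpos : (covM μ X Finset.univ).PosDef) : IsUnit (covM μ X F).det :=
  isUnit_iff_ne_zero.mpr (covM_posDef hpos).det_pos.ne'

lemma covMinv_symm (a b : F) :
    (covM μ X F)⁻¹ a b = (covM μ X F)⁻¹ b a := by
  have h : ((covM μ X F)⁻¹)ᵀ = (covM μ X F)⁻¹ := by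
    rw [Matrix.transpose_nonsing_inv, covM_symm]
  conv_lhs => rw [← h]
  rfl

lemma thp_coe (k : F) : thp μ X F j k.1 = thetaJF μ X F j k := by
  simp [thp, k.2]

lemma theta_apply (i : F) :
    thetaJF μ X F j i = ∑ k : F, (covM μ X F)⁻¹ i k * m2 μ X j k.1 := rfl

lemma covM_theta (hpos : (covM μ X Finset.univ).PosDef) (i : F) :
    ∑ k ∈ F, m2 μ X i.1 k * thp μ X F j k = m2 μ X j i.1 := by
  have h : (covM μ X F).mulVec (thetaJF μ X F j)
      = fun i : F => m2 μ X j i.1 := by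
    unfold thetaJF
    rw [Matrix.mulVec_mulVec, Matrix.mul_nonsing_inv _ (covM_det hpos),
      Matrix.one_mulVec]
    rfl
  have h2 := congrFun h i
  simp only [mulVec, dotProduct, covM_apply] at h2
  rw [← h2, ← Finset.sum_coe_sort F (fun k => m2 μ X i.1 k * thp μ X F j k)]
  exact Finset.sum_congr rfl fun k _ => by rw [thp_coe]

end
end SirAux
namespace SirAux
open TracePursuit MeasureTheory Matrix Finset

section
variable {Ω : Type*} [m0 : MeasurableSpace Ω] {μ : MeasureTheory.Measure Ω}
  [MeasureTheory.IsProbabilityMeasure μ] {p : ℕ} {X : Ω → Fin p → ℝ}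
  {F : Finset (Fin p)} {j : Fin p}

lemma int_ar_zero (hmom : ∀ i, MemLp (fun ω => X ω i) 4 μ)
    (hpos : (covM μ X Finset.univ).PosDef) {a : Fin p} (ha : a ∈ F) :
    ∫ ω, X ω a * rr μ X F j ω ∂μ = 0 := by
  rw [int_ar hmom a]
  have h := covM_theta (μ := μ) (X := X) (j := j) hpos ⟨a, ha⟩
  have h2 : ∑ k ∈ F, thp μ X F j k * m2 μ X a k
      = ∑ k ∈ F, m2 μ X a k * thp μ X F j k :=
    Finset.sum_congr rfl fun k _ => mul_comm _ _
  rw [h2, h, m2_comm a j, sub_self]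

lemma int_jr (hmom : ∀ i, MemLp (fun ω => X ω i) 4 μ)
    (hpos : (covM μ X Finset.univ).PosDef) :
    ∫ ω, X ω j * rr μ X F j ω ∂μ = ∫ ω, rr μ X F j ω ^ 2 ∂μ := by
  have h : ∫ ω, rr μ X F j ω ^ 2 ∂μ
      = ∫ ω, X ω j * rr μ X F j ω ∂μ
        - ∑ b ∈ F, thp μ X F j b * ∫ ω, X ω b * rr μ X F j ω ∂μ := by
    rw [rr_sq_eq (μ := μ) (X := X) (F := F) (j := j)]
    rw [integral_sub (intar hmom j)
      (integrable_finset_sum _ fun b _ => (intar hmom b).const_mul _),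
      integral_finset_sum _ fun b _ => (intar hmom b).const_mul _]
    simp only [integral_const_mul]
  rw [h]
  have : ∀ b ∈ F, thp μ X F j b * ∫ ω, X ω b * rr μ X F j ω ∂μ = 0 := by
    intro b hb
    rw [int_ar_zero hmom hpos hb, mul_zero]
  rw [Finset.sum_congr rfl this]
  simp

lemma xres_ae (hLCM : SubsetLCM μ X) (hj : j ∉ F) :
    xres μ X F j =ᵐ[μ] rr μ X F j := by
  have h := hLCM F j hj
  filter_upwards [h] with ω hω
  unfold xres rr
  rw [hω]
  congr 1
  rw [← Finset.sum_coe_sort F (fun a => thp μ X F j a * X ω a)]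
  exact Finset.sum_congr rfl fun i _ => by rw [thp_coe]

lemma sigma2_rr (hmom : ∀ i, MemLp (fun ω => X ω i) 4 μ)
    (hmean : ∀ i, ∫ ω, X ω i ∂μ = 0) (hLCM : SubsetLCM μ X) (hj : j ∉ F) :
    sigma2 μ X F j = ∫ ω, rr μ X F j ω ^ 2 ∂μ := by
  unfold sigma2 varF
  have h1 : ∫ ω, xres μ X F j ω ∂μ = 0 := by
    rw [integral_congr_ae (xres_ae hLCM hj)]
    exact int_rr hmom hmean
  have h2 : ∫ ω, xres μ X F j ω ^ 2 ∂μ = ∫ ω, rr μ X F j ω ^ 2 ∂μ :=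
    integral_congr_ae ((xres_ae hLCM hj).mono fun ω h => by simp only []; rw [h])
  rw [h1, h2]
  simp

end

section
variable {Ω : Type*} [m0 : MeasurableSpace Ω] {μ : MeasureTheory.Measure Ω}
  [MeasureTheory.IsProbabilityMeasure μ] {p H : ℕ} {X : Ω → Fin p → ℝ}
  {Y : Ω → ℝ} {J : Fin H → Set ℝ} {F : Finset (Fin p)} {j : Fin p}

lemma slice_rr (hmom : ∀ i, MemLp (fun ω => X ω i) 4 μ)
    (hLCM : SubsetLCM μ X) (hj : j ∉ F)
    (hsig : 0 < sigma2 μ X F j) (h : Fin H) (hph : 0 < sliceP μ Y J h) :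
    ∫ ω in Y ⁻¹' J h, rr μ X F j ω ∂μ
      = Real.sqrt (sigma2 μ X F j) * gammaH μ X Y J F j h * sliceP μ Y J h := by
  have hst : Real.sqrt (sigma2 μ X F j) ≠ 0 :=
    ne_of_gt (Real.sqrt_pos.mpr hsig)
  have hg : ∫ ω in Y ⁻¹' J h, gammaRes μ X F j ω ∂μ
      = (∫ ω in Y ⁻¹' J h, rr μ X F j ω ∂μ) / Real.sqrt (sigma2 μ X F j) := by
    rw [integral_congr_ae (ae_restrict_of_ae ((xres_ae hLCM hj).mono
      fun ω hω => by unfold gammaRes; rw [hω]))]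
    exact integral_div _ _
  unfold gammaH
  rw [hg]
  field_simp

lemma slice_xj (hmom : ∀ i, MemLp (fun ω => X ω i) 4 μ) (h : Fin H) :
    ∫ ω in Y ⁻¹' J h, X ω j ∂μ
      = (∫ ω in Y ⁻¹' J h, rr μ X F j ω ∂μ)
        + ∑ a ∈ F, thp μ X F j a * ∫ ω in Y ⁻¹' J h, X ω a ∂μ := by
  have hxj : (fun ω => X ω j)
      = fun ω => rr μ X F j ω + ∑ a ∈ F, thp μ X F j a * X ω a := by
    funext ω; simp [rr]
  rw [hxj, integral_add (intr hmom).integrableOn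
    ((integrable_finset_sum _ fun a _ => (int1 hmom a).const_mul _)).integrableOn,
    integral_finset_sum _ fun a _ => ((int1 hmom a).const_mul _).integrableOn]
  simp only [integral_const_mul]

end
end SirAux
namespace SirAux
open TracePursuit MeasureTheory Matrix Finset

section
variable {Ω : Type*} [m0 : MeasurableSpace Ω]

/-- zero-extension of `(covM F)⁻¹` to `Fin p × Fin p`. -/
def Mp (μ : MeasureTheory.Measure Ω) {p : ℕ} (X : Ω → Fin p → ℝ) (F : Finset (Fin p))
    (a b : Fin p) : ℝ :=
  if ha : a ∈ F then if hb : b ∈ F then (covM μ X F)⁻¹ ⟨a, ha⟩ ⟨b, hb⟩ else 0 else 0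

/-- candidate inverse of `covM (insert j F)`. -/
def Bmat (μ : MeasureTheory.Measure Ω) {p : ℕ} (X : Ω → Fin p → ℝ) (F : Finset (Fin p))
    (j : Fin p) : Matrix ↥(insert j F) ↥(insert j F) ℝ :=
  Matrix.of fun a b => Mp μ X F a.1 b.1
    + (sigma2 μ X F j)⁻¹ * (cp μ X F j a.1 * cp μ X F j b.1)

variable {μ : MeasureTheory.Measure Ω} [MeasureTheory.IsProbabilityMeasure μ]
  {p : ℕ} {X : Ω → Fin p → ℝ} {F : Finset (Fin p)} {j : Fin p}

lemma KA (hmom : ∀ i, MemLp (fun ω => X ω i) 4 μ) (hj : j ∉ F) (a : Fin p) :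
    ∑ k ∈ insert j F, m2 μ X a k * cp μ X F j k
      = ∫ ω, X ω a * rr μ X F j ω ∂μ := by
  rw [Finset.sum_insert hj, int_ar hmom a]
  have h1 : cp μ X F j j = 1 := if_pos rfl
  have h2 : ∑ k ∈ F, m2 μ X a k * cp μ X F j k
      = -∑ k ∈ F, thp μ X F j k * m2 μ X a k := by
    rw [← Finset.sum_neg_distrib]
    refine Finset.sum_congr rfl fun k hk => ?_
    have hkj : k ≠ j := ne_of_mem_of_not_mem hk hj
    rw [cp, if_neg hkj]
    ring
  rw [h1, h2]
  ring

lemma KB (hpos : (covM μ X Finset.univ).PosDef) (hj : j ∉ F)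
    {b : Fin p} (hb : b ∈ F) :
    ∑ k ∈ insert j F, m2 μ X j k * Mp μ X F k b = thp μ X F j b := by
  rw [Finset.sum_insert hj]
  have h1 : Mp μ X F j b = 0 := dif_neg hj
  have h2 : ∑ k ∈ F, m2 μ X j k * Mp μ X F k b = thetaJF μ X F j ⟨b, hb⟩ := by
    rw [theta_apply, ← Finset.sum_coe_sort F (fun k => m2 μ X j k * Mp μ X F k b)]
    refine Finset.sum_congr rfl fun k _ => ?_
    have : Mp μ X F k.1 b = (covM μ X F)⁻¹ k ⟨b, hb⟩ := by
      simp [Mp, k.2, hb]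
    rw [this, covMinv_symm k ⟨b, hb⟩, mul_comm]
  rw [h1, h2, thp_coe ⟨b, hb⟩]
  ring

lemma KC (hpos : (covM μ X Finset.univ).PosDef) (hj : j ∉ F)
    {a b : Fin p} (ha : a ∈ F) (hb : b ∈ F) :
    ∑ k ∈ insert j F, m2 μ X a k * Mp μ X F k b
      = if a = b then 1 else 0 := by
  rw [Finset.sum_insert hj]
  have h1 : Mp μ X F j b = 0 := dif_neg hj
  have h2 : ∑ k ∈ F, m2 μ X a k * Mp μ X F k b
      = (covM μ X F * (covM μ X F)⁻¹) ⟨a, ha⟩ ⟨b, hb⟩ := by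
    rw [Matrix.mul_apply,
      ← Finset.sum_coe_sort F (fun k => m2 μ X a k * Mp μ X F k b)]
    refine Finset.sum_congr rfl fun k _ => ?_
    have : Mp μ X F k.1 b = (covM μ X F)⁻¹ k ⟨b, hb⟩ := by
      simp [Mp, k.2, hb]
    rw [this]
    rfl
  rw [h1, h2, Matrix.mul_nonsing_inv _ (covM_det hpos), Matrix.one_apply]
  simp [Subtype.mk_eq_mk]

lemma KJ (hj : j ∉ F) (a : Fin p) :
    ∑ k ∈ insert j F, m2 μ X a k * Mp μ X F k j = 0 := by
  refine Finset.sum_eq_zero fun k _ => ?_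
  have : Mp μ X F k j = 0 := by
    simp [Mp, hj]
  rw [this, mul_zero]

lemma Binv (hmom : ∀ i, MemLp (fun ω => X ω i) 4 μ)
    (hmean : ∀ i, ∫ ω, X ω i ∂μ = 0)
    (hpos : (covM μ X Finset.univ).PosDef)
    (hLCM : SubsetLCM μ X) (hj : j ∉ F) (hsig : 0 < sigma2 μ X F j) :
    (covM μ X (insert j F))⁻¹ = Bmat μ X F j := by
  have ht : sigma2 μ X F j ≠ 0 := ne_of_gt hsig
  have hjr : ∫ ω, X ω j * rr μ X F j ω ∂μ = sigma2 μ X F j := by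
    rw [int_jr hmom hpos, ← sigma2_rr hmom hmean hLCM hj]
  apply Matrix.inv_eq_right_inv
  ext a b
  rw [Matrix.mul_apply]
  have hsplit : ∑ k : ↥(insert j F), covM μ X (insert j F) a k * Bmat μ X F j k b
      = (∑ k ∈ insert j F, m2 μ X a.1 k * Mp μ X F k b.1)
        + (sigma2 μ X F j)⁻¹ * (∑ k ∈ insert j F, m2 μ X a.1 k * cp μ X F j k)
          * cp μ X F j b.1 := by
    have : ∀ k : ↥(insert j F), covM μ X (insert j F) a k * Bmat μ X F j k b
        = m2 μ X a.1 k.1 * Mp μ X F k.1 b.1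
          + (sigma2 μ X F j)⁻¹ * (m2 μ X a.1 k.1 * cp μ X F j k.1)
            * cp μ X F j b.1 := fun k => by
      show m2 μ X a.1 k.1 * (Mp μ X F k.1 b.1
        + (sigma2 μ X F j)⁻¹ * (cp μ X F j k.1 * cp μ X F j b.1)) = _
      ring
    rw [Finset.sum_congr rfl fun k _ => this k, Finset.sum_add_distrib]
    congr 1
    · exact Finset.sum_coe_sort _ (fun k => m2 μ X a.1 k * Mp μ X F k b.1)
    · rw [← Finset.sum_mul, ← Finset.mul_sum]
      congr 1
      congr 1
      exact Finset.sum_coe_sort _ (fun k => m2 μ X a.1 k * cp μ X F j k)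
  rw [hsplit, KA hmom hj a.1]
  have hamem := a.2
  have hbmem := b.2
  rw [Finset.mem_insert] at hamem hbmem
  rcases hamem with haj | haF
  · rw [haj, hjr]
    rcases hbmem with hbj | hbF
    · rw [hbj, KJ hj j]
      have hc1 : cp μ X F j j = 1 := if_pos rfl
      have hab : a = b := Subtype.ext (by rw [haj, hbj])
      rw [hc1, hab, Matrix.one_apply_eq]
      field_simp
      norm_num
    · rw [KB hpos hj hbF]
      have hbj : b.1 ≠ j := fun hc => hj (hc ▸ hbF)
      have hc1 : cp μ X F j b.1 = -thp μ X F j b.1 := if_neg hbj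
      have hab : a ≠ b := fun hc => hbj (by rw [← hc, haj])
      rw [hc1, Matrix.one_apply_ne hab]
      field_simp
      ring
  · rw [int_ar_zero hmom hpos haF]
    rcases hbmem with hbj | hbF
    · rw [hbj, KJ hj a.1]
      have hab : a ≠ b := fun hc => hj (hbj ▸ (hc ▸ haF))
      rw [Matrix.one_apply_ne hab]
      ring
    · rw [KC hpos hj haF hbF]
      have : (if a.1 = b.1 then (1:ℝ) else 0) = (1 : Matrix _ _ ℝ) a b := by
        rw [Matrix.one_apply]
        by_cases hab : a = b
        · simp [hab]
        · rw [if_neg hab, if_neg (fun hc => hab (Subtype.ext hc))]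
      rw [this]
      ring

end
end SirAux
namespace SirAux
open TracePursuit MeasureTheory Matrix Finset

section
variable {Ω : Type*} [m0 : MeasurableSpace Ω] {μ : MeasureTheory.Measure Ω}
  [MeasureTheory.IsProbabilityMeasure μ] {p H : ℕ} {X : Ω → Fin p → ℝ}
  {Y : Ω → ℝ} {J : Fin H → Set ℝ} {F : Finset (Fin p)} {j : Fin p}

lemma quad (hmom : ∀ i, MemLp (fun ω => X ω i) 4 μ)
    (hmean : ∀ i, ∫ ω, X ω i ∂μ = 0)
    (hpos : (covM μ X Finset.univ).PosDef)
    (hLCM : SubsetLCM μ X) (hj : j ∉ F) (hsig : 0 < sigma2 μ X F j)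
    (h : Fin H) (hph : 0 < sliceP μ Y J h) :
    sliceU μ X Y J (insert j F) h ⬝ᵥ
        (Bmat μ X F j).mulVec (sliceU μ X Y J (insert j F) h)
      = sliceU μ X Y J F h ⬝ᵥ ((covM μ X F)⁻¹).mulVec (sliceU μ X Y J F h)
        + gammaH μ X Y J F j h ^ 2 := by
  have ht : sigma2 μ X F j ≠ 0 := ne_of_gt hsig
  have hp0 : sliceP μ Y J h ≠ 0 := ne_of_gt hph
  set t := sigma2 μ X F j with hts
  set γ := gammaH μ X Y J F j h with hγ
  set q : Fin p → ℝ := fun a => (∫ ω in Y ⁻¹' J h, X ω a ∂μ) / sliceP μ Y J h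
    with hq
  set C := ∑ a ∈ insert j F, cp μ X F j a * q a with hC
  set S1 : Fin p → ℝ := fun a => ∑ k ∈ insert j F, Mp μ X F a k * q k with hS1
  have hMpj : ∀ a : Fin p, Mp μ X F a j = 0 := by
    intro a; simp [Mp, hj]
  have hMpj' : ∀ a : Fin p, Mp μ X F j a = 0 := by
    intro a; simp [Mp, hj]
  -- Step A : the residual slice sum
  have hA : C = Real.sqrt t * γ := by
    rw [hC, Finset.sum_insert hj]
    have hc1 : cp μ X F j j = 1 := if_pos rfl
    have h2 : ∑ a ∈ F, cp μ X F j a * q a = -∑ a ∈ F, thp μ X F j a * q a := by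
      rw [← Finset.sum_neg_distrib]
      refine Finset.sum_congr rfl fun a ha => ?_
      rw [cp, if_neg (ne_of_mem_of_not_mem ha hj)]
      ring
    have hqj : q j = Real.sqrt t * γ + ∑ a ∈ F, thp μ X F j a * q a := by
      rw [hq]
      simp only
      rw [slice_xj hmom h, slice_rr hmom hLCM hj hsig h hph, add_div,
        Finset.sum_div]
      congr 1
      · rw [hγ, hts]; field_simp
      · exact Finset.sum_congr rfl fun a _ => by rw [mul_div_assoc]
    rw [hc1, one_mul, hqj, h2]
    ring
  -- Step B : expand the quadratic form
  have hLHS : sliceU μ X Y J (insert j F) h ⬝ᵥ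
      (Bmat μ X F j).mulVec (sliceU μ X Y J (insert j F) h)
      = ∑ a ∈ insert j F, q a * (S1 a + t⁻¹ * cp μ X F j a * C) := by
    have hib : ∀ a : Fin p,
        (∑ k ∈ insert j F,
          (Mp μ X F a k + t⁻¹ * (cp μ X F j a * cp μ X F j k)) * q k)
          = S1 a + t⁻¹ * cp μ X F j a * C := by
      intro a
      rw [hS1, hC]
      simp only
      rw [Finset.mul_sum, ← Finset.sum_add_distrib]
      refine Finset.sum_congr rfl fun k _ => by ring
    rw [← Finset.sum_coe_sort (insert j F)
      (fun a => q a * (S1 a + t⁻¹ * cp μ X F j a * C))]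
    refine Finset.sum_congr rfl fun a _ => ?_
    show (q a.1) * _ = _
    rw [← hib a.1]
    congr 1
    rw [← Finset.sum_coe_sort (insert j F)
      (fun k => (Mp μ X F a.1 k + t⁻¹ * (cp μ X F j a.1 * cp μ X F j k)) * q k)]
    rfl
  have hsplit : ∑ a ∈ insert j F, q a * (S1 a + t⁻¹ * cp μ X F j a * C)
      = (∑ a ∈ insert j F, q a * S1 a) + t⁻¹ * C * C := by
    have : ∀ a ∈ insert j F, q a * (S1 a + t⁻¹ * cp μ X F j a * C)
        = q a * S1 a + t⁻¹ * C * (cp μ X F j a * q a) := fun a _ => by ring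
    rw [Finset.sum_congr rfl this, Finset.sum_add_distrib, ← Finset.mul_sum, ← hC]
  -- Step C : the Mp part reduces to the F-quadratic form
  have hT1 : ∑ a ∈ insert j F, q a * S1 a
      = sliceU μ X Y J F h ⬝ᵥ ((covM μ X F)⁻¹).mulVec (sliceU μ X Y J F h) := by
    rw [Finset.sum_insert hj]
    have hS1j : S1 j = 0 := by
      rw [hS1]
      simp only
      exact Finset.sum_eq_zero fun k _ => by rw [hMpj', zero_mul]
    rw [hS1j, mul_zero, zero_add]
    have hinner : ∀ a ∈ F, S1 a = ∑ k ∈ F, Mp μ X F a k * q k := by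
      intro a _
      rw [hS1]
      simp only
      rw [Finset.sum_insert hj, hMpj a, zero_mul, zero_add]
    rw [Finset.sum_congr rfl fun a ha => by rw [hinner a ha]]
    rw [← Finset.sum_coe_sort F (fun a => q a * ∑ k ∈ F, Mp μ X F a k * q k)]
    refine Finset.sum_congr rfl fun a _ => ?_
    show q a.1 * _ = q a.1 * _
    congr 1
    rw [← Finset.sum_coe_sort F (fun k => Mp μ X F a.1 k * q k)]
    refine Finset.sum_congr rfl fun k _ => ?_
    show Mp μ X F a.1 k.1 * q k.1 = (covM μ X F)⁻¹ a k * q k.1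
    congr 1
    simp [Mp, a.2, k.2]
  rw [hLHS, hsplit, hT1, hA]
  have hst : Real.sqrt t ^ 2 = t := Real.sq_sqrt hsig.le
  have : t⁻¹ * (Real.sqrt t * γ) * (Real.sqrt t * γ) = γ ^ 2 := by
    have : Real.sqrt t * Real.sqrt t = t := by
      rw [← sq]; exact hst
    field_simp
    nlinarith [this]
  rw [mul_assoc] at this ⊢
  rw [mul_comm (Real.sqrt t * γ) (Real.sqrt t * γ)] at this
  rw [this]

end
end SirAux

open TracePursuit

/-- **Theorem 1, part 1 (SIR trace identity).** Under the subset linear conditional mean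
assumption, for any `F ⊂ I` and `j ∈ Fᶜ`,
`trace(M^SIR_{F∪{j}}) - trace(M^SIR_F) = Σ_h p_h γ_{j|F,h}²`. -/
theorem sir_trace_difference {Ω : Type*} [m0 : MeasurableSpace Ω]
    (μ : Measure Ω) [IsProbabilityMeasure μ]
    {p H : ℕ} (X : Ω → Fin p → ℝ) (Y : Ω → ℝ)
    (hX : Measurable X) (hY : Measurable Y)
    (hmom : ∀ i, MemLp (fun ω => X ω i) 4 μ)
    (hmean : ∀ i, ∫ ω, X ω i ∂μ = 0)
    (hpos : (covM μ X Finset.univ).PosDef)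
    (J : Fin H → Set ℝ) (hJ : IsSlicePartition J)
    (hph : ∀ h, 0 < sliceP μ Y J h)
    (invS : ∀ F : Finset (Fin p), Matrix F F ℝ)
    (hinvS : ∀ F, IsInvSqrt (invS F) (covM μ X F))
    (hLCM : SubsetLCM μ X)
    (F : Finset (Fin p)) (j : Fin p) (hj : j ∉ F)
    (hsig : 0 < sigma2 μ X F j) :
    (MSIR μ X Y J (insert j F) (invS (insert j F))).trace
      - (MSIR μ X Y J F (invS F)).trace
      = ∑ h, sliceP μ Y J h * gammaH μ X Y J F j h ^ 2 := by
  rw [SirAux.trace_MSIR μ X Y J (insert j F) _ (hinvS _),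
    SirAux.trace_MSIR μ X Y J F _ (hinvS F),
    SirAux.Binv hmom hmean hpos hLCM hj hsig,
    ← Finset.sum_sub_distrib]
  refine Finset.sum_congr rfl fun h _ => ?_
  rw [SirAux.quad hmom hmean hpos hLCM hj hsig h (hph h)]
  ring
end
end

section
/- Assume the subset LCM assumption: for every F ⊂ I and j ∈ F^c, E(x_j | X_F) = E(x_j X_Fᵀ)Σ_F^{-1}X_F almost surely. If A ⊆ F for an active set A and j ∈ F^c, then trace(M^SIR_{F∪{j}}) − trace(M^SIR_F) = 0. -/
open MeasureTheory ProbabilityTheory Matrix Filter Finset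
open scoped BigOperators ENNReal

noncomputable section

open TracePursuit


lemma trace_vecMulVec_mul {n : Type*} [Fintype n] (u : n → ℝ) (N : Matrix n n ℝ) :
    (vecMulVec u u * N).trace = u ⬝ᵥ (N *ᵥ u) := by
  simp only [Matrix.trace, Matrix.diag, Matrix.mul_apply, vecMulVec_apply, dotProduct,
    Matrix.mulVec, Finset.mul_sum]
  rw [Finset.sum_comm]
  exact Finset.sum_congr rfl fun k _ => Finset.sum_congr rfl fun i _ => by ring

lemma posDef_submatrix_of_injective {m n : Type*} [Fintype m] [Fintype n] [DecidableEq n]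
    [DecidableEq m] {M : Matrix n n ℝ} (hM : M.PosDef) (e : m → n)
    (he : Function.Injective e) : (M.submatrix e e).PosDef := by
  refine Matrix.PosDef.of_dotProduct_mulVec_pos (hM.isHermitian.submatrix e) fun x hx => ?_
  classical
  set y : n → ℝ := fun k => ∑ i, if e i = k then x i else 0 with hy
  have hsum : ∀ f : n → ℝ, (∑ k, y k * f k) = ∑ i, x i * f (e i) := by
    intro f
    calc (∑ k, y k * f k) = ∑ k, ∑ i, (if e i = k then x i * f k else 0) := by
          refine Finset.sum_congr rfl fun k _ => ?_
          simp [hy, Finset.sum_mul, ite_mul]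
      _ = ∑ i, ∑ k, (if e i = k then x i * f k else 0) := Finset.sum_comm
      _ = ∑ i, x i * f (e i) := by simp [Finset.sum_ite_eq]
  have hyx : ∀ i, y (e i) = x i := by
    intro i
    calc y (e i) = ∑ i', if i' = i then x i' else 0 :=
          Finset.sum_congr rfl fun i' _ => by simp [he.eq_iff]
      _ = x i := by simp
  have hyne : y ≠ 0 := by
    obtain ⟨i, hi⟩ := Function.ne_iff.mp hx
    intro h
    exact hi (by rw [← hyx i, h]; rfl)
  have key : star x ⬝ᵥ ((M.submatrix e e) *ᵥ x) = star y ⬝ᵥ (M *ᵥ y) := by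
    simp only [star_trivial, dotProduct, Matrix.mulVec, Matrix.submatrix_apply]
    rw [hsum fun k => ∑ l, M k l * y l]
    refine Finset.sum_congr rfl fun i _ => ?_
    congr 1
    refine Eq.symm ?_
    calc (∑ l, M (e i) l * y l) = ∑ l, y l * M (e i) l := by
          exact Finset.sum_congr rfl fun l _ => mul_comm _ _
      _ = ∑ k, x k * M (e i) (e k) := hsum _
      _ = ∑ k, M (e i) (e k) * x k := Finset.sum_congr rfl fun k _ => mul_comm _ _
  rw [key]
  exact hM.dotProduct_mulVec_pos hyne

lemma quad_insert {p : ℕ} {F : Finset (Fin p)} {j : Fin p} (hj : j ∉ F)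
    (c : Fin p → Fin p → ℝ) (hsym : ∀ a b, c a b = c b a) (u : Fin p → ℝ)
    (hdF : IsUnit (Matrix.of fun i k : F => c i.1 k.1).det)
    (hdG : IsUnit (Matrix.of fun i k : (insert j F : Finset (Fin p)) => c i.1 k.1).det)
    (hu : u j = ∑ i : F,
      ((Matrix.of fun i k : F => c i.1 k.1)⁻¹ *ᵥ fun i : F => c j i.1) i * u i.1) :
    (fun i : (insert j F : Finset (Fin p)) => u i.1) ⬝ᵥ
        ((Matrix.of fun i k : (insert j F : Finset (Fin p)) => c i.1 k.1)⁻¹ *ᵥ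
          fun i : (insert j F : Finset (Fin p)) => u i.1)
      = (fun i : F => u i.1) ⬝ᵥ
          ((Matrix.of fun i k : F => c i.1 k.1)⁻¹ *ᵥ fun i : F => u i.1) := by
  classical
  set G : Finset (Fin p) := insert j F with hGdef
  set CF : Matrix F F ℝ := Matrix.of fun i k : F => c i.1 k.1 with hCF
  set CG : Matrix ↥G ↥G ℝ :=
    Matrix.of fun i k => c i.1 k.1 with hCG
  set uF : F → ℝ := fun i => u i.1 with huF
  set uG : ↥G → ℝ := fun i => u i.1 with huG
  set a : F → ℝ := CF⁻¹ *ᵥ uF with ha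
  set b : ↥G → ℝ :=
    fun i => if h : i.1 ∈ F then a ⟨i.1, h⟩ else 0 with hb
  have hCFsym : CFᵀ = CF := by
    ext i k
    exact hsym k.1 i.1
  have hmul : CG *ᵥ b = uG := by
    funext i
    have e1 : (CG *ᵥ b) i = ∑ k : F, c i.1 k.1 * a k := by
      show (∑ k : ↥G, CG i k * b k) = _
      have h2 : ∀ k : ↥G, CG i k * b k =
          (fun k' : Fin p => c i.1 k' * if h : k' ∈ F then a ⟨k', h⟩ else 0) k.1 :=
        fun k => rfl
      rw [Finset.sum_congr rfl fun k _ => h2 k,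
        Finset.sum_coe_sort G
          (fun k' => c i.1 k' * if h : k' ∈ F then a ⟨k', h⟩ else 0),
        Finset.sum_insert hj, dif_neg hj, mul_zero, zero_add,
        ← Finset.sum_coe_sort F
          (fun k' => c i.1 k' * if h : k' ∈ F then a ⟨k', h⟩ else 0)]
      exact Finset.sum_congr rfl fun k _ => by rw [dif_pos k.2]
    by_cases hi : i.1 ∈ F
    · have e2 : (∑ k : F, c i.1 k.1 * a k) = (CF *ᵥ a) ⟨i.1, hi⟩ := rfl
      rw [e1, e2, ha, Matrix.mulVec_mulVec, Matrix.mul_nonsing_inv _ hdF,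
        Matrix.one_mulVec]
    · have hij : i.1 = j := by
        rcases Finset.mem_insert.mp i.2 with h | h
        · exact h
        · exact absurd h hi
      have e2 : (∑ k : F, c i.1 k.1 * a k) = (fun k : F => c j k.1) ⬝ᵥ a := by
        rw [show (∑ k : F, c i.1 k.1 * a k) = ∑ k : F, c i.1 k.1 * a k from rfl]
        simp only [dotProduct, hij]
      have hsymInv : (CF⁻¹)ᵀ = CF⁻¹ := by
        rw [Matrix.transpose_nonsing_inv, hCFsym]
      have e3 : (fun k : F => c j k.1) ⬝ᵥ a = u j := by
        rw [ha, Matrix.dotProduct_mulVec]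
        have e4 : (fun k : F => c j k.1) ᵥ* CF⁻¹ = CF⁻¹ *ᵥ (fun k : F => c j k.1) := by
          rw [← Matrix.vecMul_transpose CF⁻¹ (fun k : F => c j k.1), hsymInv]
        rw [e4, hu]
        rfl
      rw [e1, e2, e3]
      show u j = u i.1
      rw [hij]
  have hbvec : CG⁻¹ *ᵥ uG = b := by
    rw [← hmul, Matrix.mulVec_mulVec, Matrix.nonsing_inv_mul _ hdG, Matrix.one_mulVec]
  rw [hbvec]
  show (∑ i : ↥G, uG i * b i) = ∑ i : F, uF i * a i
  have h2 : ∀ i : ↥G, uG i * b i =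
      (fun k : Fin p => u k * if h : k ∈ F then a ⟨k, h⟩ else 0) i.1 := fun i => rfl
  rw [Finset.sum_congr rfl fun i _ => h2 i,
    Finset.sum_coe_sort G (fun k => u k * if h : k ∈ F then a ⟨k, h⟩ else 0),
    Finset.sum_insert hj, dif_neg hj, mul_zero, zero_add,
    ← Finset.sum_coe_sort F (fun k => u k * if h : k ∈ F then a ⟨k, h⟩ else 0)]
  exact Finset.sum_congr rfl fun i _ => by rw [dif_pos i.2]



lemma setIntegral_eq_of_condIndepFun {Ω γ : Type*} {m' : MeasurableSpace Ω}
    [m0 : MeasurableSpace Ω] [StandardBorelSpace Ω] [mγ : MeasurableSpace γ]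
    {μ : Measure Ω} [IsProbabilityMeasure μ] (hm' : m' ≤ m0)
    {Y : Ω → ℝ} {Z : Ω → γ} (hY : Measurable Y) (hZ : Measurable Z)
    (hind : CondIndepFun m' hm' Y Z μ)
    {t : Set ℝ} (ht : MeasurableSet t)
    {g : Ω → ℝ} (hg : Integrable g μ)
    (hgm : StronglyMeasurable[MeasurableSpace.comap Z mγ] g) :
    ∫ ω in Y ⁻¹' t, g ω ∂μ = ∫ ω in Y ⁻¹' t, (μ[g|m']) ω ∂μ := by
  have hmZ : MeasurableSpace.comap Z mγ ≤ m0 := hZ.comap_le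
  set s : Set Ω := Y ⁻¹' t with hsdef
  have hsm : MeasurableSet s := hY ht
  replace hind := (condIndepFun_iff_condExp_inter_preimage_eq_mul (hm' := hm') (μ := μ) hY hZ).mp hind
  -- base case : indicators of Z-measurable sets
  have base : ∀ v : Set γ, MeasurableSet v →
      ∫ ω in s, (Z ⁻¹' v).indicator (fun _ => (1:ℝ)) ω ∂μ
        = ∫ ω in s, (μ[(Z ⁻¹' v).indicator (fun _ => (1:ℝ))|m']) ω ∂μ := by
    intro v hv
    have hum : MeasurableSet (Z ⁻¹' v) := hZ hv
    have h1 : ∫ ω in s, (Z ⁻¹' v).indicator (fun _ => (1:ℝ)) ω ∂μ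
        = ∫ ω, (μ⟦s|m'⟧) ω * (μ⟦Z ⁻¹' v|m'⟧) ω ∂μ := by
      rw [MeasureTheory.setIntegral_indicator hum, MeasureTheory.setIntegral_const,
        smul_eq_mul, mul_one]
      have h2 : μ.real (s ∩ Z ⁻¹' v)
          = ∫ ω, (s ∩ Z ⁻¹' v).indicator (fun _ => (1:ℝ)) ω ∂μ := by
        rw [MeasureTheory.integral_indicator (hsm.inter hum)]
        simp
      rw [h2, ← MeasureTheory.integral_condExp hm']
      exact integral_congr_ae (hind t v ht hv)
    set φ : Ω → ℝ := μ[(Z ⁻¹' v).indicator (fun _ => (1:ℝ))|m'] with hφ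
    have hφint : Integrable φ μ := integrable_condExp
    have hφm : StronglyMeasurable[m'] φ := stronglyMeasurable_condExp
    have hsint : Integrable (s.indicator (fun _ => (1:ℝ))) μ := (integrable_const 1).indicator hsm
    have e2 : s.indicator φ = φ * s.indicator (fun _ => (1:ℝ)) := by
      funext ω
      by_cases hω : ω ∈ s <;> simp [hω]
    have hprod : Integrable (φ * s.indicator fun _ => (1:ℝ)) μ := by
      rw [← e2]; exact hφint.indicator hsm
    have e3 : μ[φ * s.indicator fun _ => (1:ℝ)|m'] =ᵐ[μ] φ * μ[s.indicator (fun _ => (1:ℝ))|m'] :=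
      condExp_mul_of_stronglyMeasurable_left hφm hprod hsint
    have h3 : ∫ ω in s, φ ω ∂μ = ∫ ω, (μ⟦s|m'⟧) ω * (μ⟦Z ⁻¹' v|m'⟧) ω ∂μ := by
      calc ∫ ω in s, φ ω ∂μ = ∫ ω, s.indicator φ ω ∂μ := (integral_indicator hsm).symm
        _ = ∫ ω, (φ * s.indicator fun _ => (1:ℝ)) ω ∂μ := by rw [e2]
        _ = ∫ ω, (μ[φ * s.indicator fun _ => (1:ℝ)|m']) ω ∂μ :=
            (MeasureTheory.integral_condExp hm').symm
        _ = ∫ ω, (φ * μ[s.indicator (fun _ => (1:ℝ))|m']) ω ∂μ := integral_congr_ae e3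
        _ = ∫ ω, (μ⟦s|m'⟧) ω * (μ⟦Z ⁻¹' v|m'⟧) ω ∂μ := by
            refine integral_congr_ae (Eventually.of_forall fun ω => ?_)
            exact mul_comm _ _
    rw [h1, h3]
  -- monotone class argument
  set ν := μ.trim hmZ with hν
  have key : ∀ ⦃f : Ω → ℝ⦄, Integrable f ν →
      ∫ ω in s, f ω ∂μ = ∫ ω in s, (μ[f|m']) ω ∂μ := by
    refine @Integrable.induction Ω ℝ (MeasurableSpace.comap Z mγ) _ ν
      (fun f => ∫ ω in s, f ω ∂μ = ∫ ω in s, (μ[f|m']) ω ∂μ) ?_ ?_ ?_ ?_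
    · -- indicator
      intro c u hu hνu
      obtain ⟨v, hv, rfl⟩ := MeasurableSpace.measurableSet_comap.mp hu
      have e1 : (Z ⁻¹' v).indicator (fun _ => c)
          = fun ω => c * (Z ⁻¹' v).indicator (fun _ => (1:ℝ)) ω := by
        funext ω
        by_cases hω : ω ∈ Z ⁻¹' v <;> simp [hω]
      have e1' : (Z ⁻¹' v).indicator (fun _ => c)
          = c • (Z ⁻¹' v).indicator (fun _ => (1:ℝ)) := e1
      rw [e1']
      have hsmul : μ[c • (Z ⁻¹' v).indicator (fun _ => (1:ℝ))|m']
          =ᵐ[μ] c • μ[(Z ⁻¹' v).indicator (fun _ => (1:ℝ))|m'] := condExp_smul c _ m'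
      calc ∫ ω in s, (c • (Z ⁻¹' v).indicator (fun _ => (1:ℝ))) ω ∂μ
          = c * ∫ ω in s, (Z ⁻¹' v).indicator (fun _ => (1:ℝ)) ω ∂μ := by
            simp_rw [Pi.smul_apply, smul_eq_mul]
            exact integral_const_mul c _
        _ = c * ∫ ω in s, (μ[(Z ⁻¹' v).indicator (fun _ => (1:ℝ))|m']) ω ∂μ := by
            rw [base v hv]
        _ = ∫ ω in s, (c • μ[(Z ⁻¹' v).indicator (fun _ => (1:ℝ))|m']) ω ∂μ := by
            simp_rw [Pi.smul_apply, smul_eq_mul]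
            exact (integral_const_mul c _).symm
        _ = ∫ ω in s, (μ[c • (Z ⁻¹' v).indicator (fun _ => (1:ℝ))|m']) ω ∂μ :=
            (integral_congr_ae (ae_restrict_of_ae hsmul)).symm
    · -- additivity
      intro f g hdisj hfν hgν hPf hPg
      have hfi : Integrable f μ := integrable_of_integrable_trim hmZ hfν
      have hgi : Integrable g μ := integrable_of_integrable_trim hmZ hgν
      have hce : μ[f + g|m'] =ᵐ[μ] μ[f|m'] + μ[g|m'] := condExp_add hfi hgi m'
      calc ∫ ω in s, (f + g) ω ∂μ = ∫ ω in s, (f ω + g ω) ∂μ := rfl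
        _ = (∫ ω in s, f ω ∂μ) + ∫ ω in s, g ω ∂μ :=
            integral_add hfi.integrableOn hgi.integrableOn
        _ = (∫ ω in s, (μ[f|m']) ω ∂μ) + ∫ ω in s, (μ[g|m']) ω ∂μ := by rw [hPf, hPg]
        _ = ∫ ω in s, ((μ[f|m']) ω + (μ[g|m']) ω) ∂μ :=
            (integral_add integrable_condExp.integrableOn integrable_condExp.integrableOn).symm
        _ = ∫ ω in s, (μ[f + g|m']) ω ∂μ := by
            refine (integral_congr_ae (ae_restrict_of_ae ?_)).symm
            filter_upwards [hce] with ω hω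
            simpa using hω
    · -- closedness
      have habs : ∀ f : Lp ℝ 1 ν, ∫ ω, ‖(f : Ω → ℝ) ω‖ ∂μ = ‖f‖ := by
        intro f
        rw [L1.norm_eq_integral_norm, ← integral_trim_ae hmZ (Lp.aestronglyMeasurable f).norm]
      have hlip1 : LipschitzWith 1 (fun f : Lp ℝ 1 ν => ∫ ω in s, (f : Ω → ℝ) ω ∂μ) := by
        refine LipschitzWith.of_dist_le_mul fun f g => ?_
        rw [NNReal.coe_one, one_mul, dist_eq_norm, dist_eq_norm]
        have hfi : Integrable (f : Ω → ℝ) μ :=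
          integrable_of_integrable_trim hmZ (L1.integrable_coeFn f)
        have hgi : Integrable (g : Ω → ℝ) μ :=
          integrable_of_integrable_trim hmZ (L1.integrable_coeFn g)
        have hsub : (↑(f - g) : Ω → ℝ) =ᵐ[μ] fun ω => (f : Ω → ℝ) ω - (g : Ω → ℝ) ω :=
          ae_eq_of_ae_eq_trim (Lp.coeFn_sub f g)
        have hfgi : Integrable (↑(f - g) : Ω → ℝ) μ :=
          integrable_of_integrable_trim hmZ (L1.integrable_coeFn (f - g))
        calc ‖(∫ ω in s, (f : Ω → ℝ) ω ∂μ) - ∫ ω in s, (g : Ω → ℝ) ω ∂μ‖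
            = ‖∫ ω in s, ((f : Ω → ℝ) ω - (g : Ω → ℝ) ω) ∂μ‖ := by
              rw [integral_sub hfi.integrableOn hgi.integrableOn]
          _ = ‖∫ ω in s, (↑(f - g) : Ω → ℝ) ω ∂μ‖ := by
              rw [integral_congr_ae (ae_restrict_of_ae hsub)]
          _ ≤ ∫ ω in s, ‖(↑(f - g) : Ω → ℝ) ω‖ ∂μ := by
              exact (norm_integral_le_integral_norm _)
          _ ≤ ∫ ω, ‖(↑(f - g) : Ω → ℝ) ω‖ ∂μ :=
              setIntegral_le_integral hfgi.norm (Eventually.of_forall fun ω => norm_nonneg _)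
          _ = ‖f - g‖ := habs _
      have hlip2 : LipschitzWith 1
          (fun f : Lp ℝ 1 ν => ∫ ω in s, (μ[(f : Ω → ℝ)|m']) ω ∂μ) := by
        refine LipschitzWith.of_dist_le_mul fun f g => ?_
        rw [NNReal.coe_one, one_mul, dist_eq_norm, dist_eq_norm]
        have hfi : Integrable (f : Ω → ℝ) μ :=
          integrable_of_integrable_trim hmZ (L1.integrable_coeFn f)
        have hgi : Integrable (g : Ω → ℝ) μ :=
          integrable_of_integrable_trim hmZ (L1.integrable_coeFn g)
        have hsub : (↑(f - g) : Ω → ℝ) =ᵐ[μ] fun ω => (f : Ω → ℝ) ω - (g : Ω → ℝ) ω :=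
          ae_eq_of_ae_eq_trim (Lp.coeFn_sub f g)
        have hfgi : Integrable (↑(f - g) : Ω → ℝ) μ :=
          integrable_of_integrable_trim hmZ (L1.integrable_coeFn (f - g))
        have hcesub : μ[(↑(f - g) : Ω → ℝ)|m']
            =ᵐ[μ] fun ω => (μ[(f : Ω → ℝ)|m']) ω - (μ[(g : Ω → ℝ)|m']) ω := by
          refine (condExp_congr_ae hsub).trans ?_
          filter_upwards [condExp_sub hfi hgi m'] with ω hω
          exact hω
        calc ‖(∫ ω in s, (μ[(f : Ω → ℝ)|m']) ω ∂μ) - ∫ ω in s, (μ[(g : Ω → ℝ)|m']) ω ∂μ‖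
            = ‖∫ ω in s, ((μ[(f : Ω → ℝ)|m']) ω - (μ[(g : Ω → ℝ)|m']) ω) ∂μ‖ := by
              rw [integral_sub integrable_condExp.integrableOn integrable_condExp.integrableOn]
          _ = ‖∫ ω in s, (μ[(↑(f - g) : Ω → ℝ)|m']) ω ∂μ‖ := by
              rw [integral_congr_ae (ae_restrict_of_ae hcesub)]
          _ ≤ ∫ ω in s, ‖(μ[(↑(f - g) : Ω → ℝ)|m']) ω‖ ∂μ := norm_integral_le_integral_norm _
          _ ≤ ∫ ω, ‖(μ[(↑(f - g) : Ω → ℝ)|m']) ω‖ ∂μ :=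
              setIntegral_le_integral integrable_condExp.norm
                (Eventually.of_forall fun ω => norm_nonneg _)
          _ ≤ ∫ ω, ‖(↑(f - g) : Ω → ℝ) ω‖ ∂μ := by
              simpa [Real.norm_eq_abs] using integral_abs_condExp_le (μ := μ) (m := m')
                (↑(f - g) : Ω → ℝ)
          _ = ‖f - g‖ := habs _
      exact isClosed_eq hlip1.continuous hlip2.continuous
    · -- invariance under a.e. equality
      intro f g hfg hfi hPf
      have hfg' : f =ᵐ[μ] g := ae_eq_of_ae_eq_trim hfg
      have h1 : ∫ ω in s, g ω ∂μ = ∫ ω in s, f ω ∂μ :=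
        integral_congr_ae (ae_restrict_of_ae hfg'.symm)
      have h2 : ∫ ω in s, (μ[g|m']) ω ∂μ = ∫ ω in s, (μ[f|m']) ω ∂μ :=
        integral_congr_ae (ae_restrict_of_ae (condExp_congr_ae hfg'.symm))
      rw [h1, h2]
      exact hPf
  exact key (hg.trim hmZ hgm)


namespace TracePursuit
variable {Ω : Type*}

lemma measurable_mF [m0 : MeasurableSpace Ω] {p : ℕ} (X : Ω → Fin p → ℝ)
    (F : Finset (Fin p)) {i : Fin p} (hi : i ∈ F) :
    Measurable[mF X F] fun ω => X ω i := by
  have h0 : Measurable[mF X F] (fun ω => fun i : F => X ω i.1) :=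
    Measurable.of_comap_le le_rfl
  exact (measurable_pi_apply (⟨i, hi⟩ : F)).comp h0

lemma mF_le [m0 : MeasurableSpace Ω] {p : ℕ} {X : Ω → Fin p → ℝ} (hX : Measurable X)
    (F : Finset (Fin p)) : mF X F ≤ m0 :=
  Measurable.comap_le (measurable_pi_lambda _ fun i => (measurable_pi_apply i.1).comp hX)

lemma mF_mono [m0 : MeasurableSpace Ω] {p : ℕ} (X : Ω → Fin p → ℝ)
    {A F : Finset (Fin p)} (hAF : A ⊆ F) : mF X A ≤ mF X F := by
  have hr : Measurable fun (v : F → ℝ) => fun i : A => v ⟨i.1, hAF i.2⟩ :=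
    measurable_pi_lambda _ fun i => measurable_pi_apply _
  have he : mF X A = (MeasurableSpace.comap (fun v : F → ℝ => fun i : A => v ⟨i.1, hAF i.2⟩)
      inferInstance).comap (fun ω => fun i : F => X ω i.1) := by
    rw [MeasurableSpace.comap_comp]
    rfl
  rw [he]
  exact MeasurableSpace.comap_mono hr.comap_le

lemma covM_posDef [m0 : MeasurableSpace Ω] {μ : Measure Ω} {p : ℕ} {X : Ω → Fin p → ℝ}
    (hpos : (covM μ X Finset.univ).PosDef) (F : Finset (Fin p)) : (covM μ X F).PosDef := by
  have he : Function.Injective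
      (fun i : F => (⟨i.1, Finset.mem_univ i.1⟩ : (Finset.univ : Finset (Fin p)))) :=
    fun i i' hii => by have := congrArg Subtype.val hii; exact Subtype.ext this
  exact posDef_submatrix_of_injective hpos _ he

lemma trace_MSIR_eq [m0 : MeasurableSpace Ω] (μ : Measure Ω) {p H : ℕ}
    (X : Ω → Fin p → ℝ) (Y : Ω → ℝ) (J : Fin H → Set ℝ) (F : Finset (Fin p))
    (S : Matrix F F ℝ) (hS : S * S = (covM μ X F)⁻¹) :
    (MSIR μ X Y J F S).trace = ∑ h, sliceP μ Y J h *
      (sliceU μ X Y J F h ⬝ᵥ ((covM μ X F)⁻¹ *ᵥ sliceU μ X Y J F h)) := by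
  unfold MSIR
  rw [Matrix.trace_mul_cycle, hS, Matrix.trace_mul_comm, Finset.sum_mul, Matrix.trace_sum]
  refine Finset.sum_congr rfl fun h _ => ?_
  rw [Matrix.smul_mul, Matrix.trace_smul, trace_vecMulVec_mul, smul_eq_mul]

end TracePursuit



/-- **Theorem 1, part 2.** Under the subset LCM assumption, if `A ⊆ F` for an active set `A`
(i.e. `Y ⟂ X_{Aᶜ} | X_A`) and `j ∈ Fᶜ`, then
`trace(M^SIR_{F∪{j}}) - trace(M^SIR_F) = 0`. -/
theorem sir_trace_difference_zero {Ω : Type*} [m0 : MeasurableSpace Ω]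
    [StandardBorelSpace Ω] [Nonempty Ω]
    (μ : Measure Ω) [IsProbabilityMeasure μ]
    {p H : ℕ} (X : Ω → Fin p → ℝ) (Y : Ω → ℝ)
    (hX : Measurable X) (hY : Measurable Y)
    (hmom : ∀ i, MemLp (fun ω => X ω i) 4 μ)
    (hmean : ∀ i, ∫ ω, X ω i ∂μ = 0)
    (hpos : (covM μ X Finset.univ).PosDef)
    (J : Fin H → Set ℝ) (hJ : IsSlicePartition J)
    (hph : ∀ h, 0 < sliceP μ Y J h)
    (invS : ∀ F : Finset (Fin p), Matrix F F ℝ)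
    (hinvS : ∀ F, IsInvSqrt (invS F) (covM μ X F))
    (hLCM : SubsetLCM μ X)
    (A : Finset (Fin p)) (hleA : mF X A ≤ m0)
    (hA : CondIndepFun (mF X A) hleA Y (fun ω => fun i : (Aᶜ : Finset (Fin p)) => X ω i.1) μ)
    (F : Finset (Fin p)) (hAF : A ⊆ F) (j : Fin p) (hj : j ∉ F) :
    (MSIR μ X Y J (insert j F) (invS (insert j F))).trace
      - (MSIR μ X Y J F (invS F)).trace = 0 := by
  classical
  have hXi : ∀ i, Integrable (fun ω => X ω i) μ := fun i => (hmom i).integrable (by norm_num)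
  have hleF : mF X F ≤ m0 := mF_le hX F
  have hjA : j ∉ A := fun hmem => hj (hAF hmem)
  set θ : F → ℝ := thetaJF μ X F j with hθ
  set L : Ω → ℝ := fun ω => ∑ i : F, θ i * X ω i.1 with hLdef
  set LA : Ω → ℝ :=
    fun ω => ∑ i ∈ Finset.univ.filter (fun i : F => i.1 ∈ A), θ i * X ω i.1 with hLAdef
  set LB : Ω → ℝ :=
    fun ω => ∑ i ∈ Finset.univ.filter (fun i : F => ¬ i.1 ∈ A), θ i * X ω i.1 with hLBdef
  have hsplit : ∀ ω, L ω = LA ω + LB ω := fun ω =>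
    (Finset.sum_filter_add_sum_filter_not Finset.univ (fun i : F => i.1 ∈ A) _).symm
  have hLint : Integrable L μ :=
    integrable_finset_sum _ fun i _ => ((hXi i.1).const_mul (θ i))
  have hLAint : Integrable LA μ :=
    integrable_finset_sum _ fun i _ => ((hXi i.1).const_mul (θ i))
  have hLBint : Integrable LB μ :=
    integrable_finset_sum _ fun i _ => ((hXi i.1).const_mul (θ i))
  have hLmeas : Measurable[mF X F] L :=
    Finset.measurable_sum _ fun i _ => (measurable_mF X F i.2).const_mul (θ i)
  have hLAmeas : Measurable[mF X A] LA :=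
    Finset.measurable_sum _ fun i hi =>
      (measurable_mF X A (Finset.mem_filter.mp hi).2).const_mul (θ i)
  have hEf : μ[(fun ω => X ω j) - L|mF X F] =ᵐ[μ] 0 := by
    have h1 := condExp_sub (m := mF X F) (μ := μ) (hXi j) hLint
    refine h1.trans ?_
    rw [condExp_of_stronglyMeasurable hleF hLmeas.stronglyMeasurable hLint]
    filter_upwards [hLCM F j hj] with ω hω
    simp only [Pi.sub_apply, Pi.zero_apply]
    rw [hω]
    simp [hLdef, hθ]
  have hEfA : μ[(fun ω => X ω j) - L|mF X A] =ᵐ[μ] 0 := by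
    have h2 := (condExp_condExp_of_le (mF_mono X hAF) hleF
      (f := (fun ω => X ω j) - L) (μ := μ)).symm
    refine h2.trans ?_
    refine (condExp_congr_ae hEf).trans ?_
    rw [condExp_zero]
  have hZmeas : Measurable (fun ω => fun i : (Aᶜ : Finset (Fin p)) => X ω i.1) :=
    measurable_pi_lambda _ fun i => (measurable_pi_apply i.1).comp hX
  have hjAc : j ∈ (Aᶜ : Finset (Fin p)) := Finset.mem_compl.mpr hjA
  have hgmeas : Measurable[mF X (Aᶜ)] ((fun ω => X ω j) - LB) := by
    refine Measurable.sub (measurable_mF X (Aᶜ) hjAc) ?_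
    refine Finset.measurable_sum _ fun i hi => ?_
    exact (measurable_mF X (Aᶜ)
      (Finset.mem_compl.mpr (Finset.mem_filter.mp hi).2)).const_mul (θ i)
  have hcondg : μ[(fun ω => X ω j) - LB|mF X A] =ᵐ[μ] LA := by
    have hgeq : (fun ω => X ω j) - LB = ((fun ω => X ω j) - L) + LA := by
      funext ω
      simp only [Pi.add_apply, Pi.sub_apply]
      rw [hsplit ω]; ring
    rw [hgeq]
    refine (condExp_add ((hXi j).sub hLint) hLAint (mF X A)).trans ?_
    rw [condExp_of_stronglyMeasurable hleA hLAmeas.stronglyMeasurable hLAint]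
    filter_upwards [hEfA] with ω hω
    simp only [Pi.add_apply]
    rw [hω]
    simp
  have hstep : ∀ h : Fin H, ∫ ω in Y ⁻¹' J h, X ω j ∂μ
      = ∑ i : F, θ i * ∫ ω in Y ⁻¹' J h, X ω i.1 ∂μ := by
    intro h
    have hJm : MeasurableSet (J h) := hJ.1 h
    have e0 : ∫ ω in Y ⁻¹' J h, ((fun ω => X ω j) - LB) ω ∂μ
        = ∫ ω in Y ⁻¹' J h, (μ[(fun ω => X ω j) - LB|mF X A]) ω ∂μ :=
      setIntegral_eq_of_condIndepFun hleA hY hZmeas hA hJm ((hXi j).sub hLBint)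
        hgmeas.stronglyMeasurable
    have e1 : ∫ ω in Y ⁻¹' J h, ((fun ω => X ω j) - LB) ω ∂μ
        = ∫ ω in Y ⁻¹' J h, LA ω ∂μ :=
      e0.trans (integral_congr_ae (ae_restrict_of_ae hcondg))
    have e2 : ∫ ω in Y ⁻¹' J h, ((fun ω => X ω j) - LB) ω ∂μ
        = (∫ ω in Y ⁻¹' J h, X ω j ∂μ) - ∫ ω in Y ⁻¹' J h, LB ω ∂μ :=
      integral_sub (hXi j).integrableOn hLBint.integrableOn
    have e3 : ∫ ω in Y ⁻¹' J h, X ω j ∂μ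
        = (∫ ω in Y ⁻¹' J h, LA ω ∂μ) + ∫ ω in Y ⁻¹' J h, LB ω ∂μ := by
      rw [← e1, e2]; ring
    have e4 : (∫ ω in Y ⁻¹' J h, LA ω ∂μ) + ∫ ω in Y ⁻¹' J h, LB ω ∂μ
        = ∫ ω in Y ⁻¹' J h, L ω ∂μ := by
      rw [← integral_add hLAint.integrableOn hLBint.integrableOn]
      exact integral_congr_ae (Eventually.of_forall fun ω => (hsplit ω).symm)
    have e5 : ∫ ω in Y ⁻¹' J h, (∑ i : F, θ i * X ω i.1) ∂μ
        = ∑ i : F, ∫ ω in Y ⁻¹' J h, θ i * X ω i.1 ∂μ :=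
      integral_finset_sum Finset.univ
        (fun i _ => ((hXi i.1).const_mul (θ i)).integrableOn)
    rw [e3, e4, hLdef, e5]
    exact Finset.sum_congr rfl fun i _ => integral_const_mul _ _
  have hsym : ∀ a b : Fin p, (∫ ω, X ω a * X ω b ∂μ) = ∫ ω, X ω b * X ω a ∂μ := fun a b => by
    simp_rw [mul_comm]
  have hpF : (covM μ X F).PosDef := covM_posDef hpos F
  have hpG : (covM μ X (insert j F)).PosDef := covM_posDef hpos (insert j F)
  have hdF : IsUnit (covM μ X F).det := hpF.det_pos.ne'.isUnit
  have hdG : IsUnit (covM μ X (insert j F)).det := hpG.det_pos.ne'.isUnit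
  rw [trace_MSIR_eq μ X Y J (insert j F) _ (hinvS (insert j F)).2,
    trace_MSIR_eq μ X Y J F _ (hinvS F).2, ← Finset.sum_sub_distrib]
  refine Finset.sum_eq_zero fun h _ => ?_
  have hu : (fun k : Fin p => (∫ ω in Y ⁻¹' J h, X ω k ∂μ) / sliceP μ Y J h) j
      = ∑ i : F, ((Matrix.of fun i k : F => (∫ ω, X ω i.1 * X ω k.1 ∂μ))⁻¹ *ᵥ
            fun i : F => ∫ ω, X ω j * X ω i.1 ∂μ) i *
          (fun k : Fin p => (∫ ω in Y ⁻¹' J h, X ω k ∂μ) / sliceP μ Y J h) i.1 := by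
    simp only
    rw [hstep h, Finset.sum_div]
    exact Finset.sum_congr rfl fun i _ => mul_div_assoc _ _ _
  have hq := quad_insert hj (fun a b => ∫ ω, X ω a * X ω b ∂μ) hsym
    (fun k => (∫ ω in Y ⁻¹' J h, X ω k ∂μ) / sliceP μ Y J h) hdF hdG hu
  have hq' : sliceU μ X Y J (insert j F) h ⬝ᵥ
        ((covM μ X (insert j F))⁻¹ *ᵥ sliceU μ X Y J (insert j F) h)
      = sliceU μ X Y J F h ⬝ᵥ ((covM μ X F)⁻¹ *ᵥ sliceU μ X Y J F h) := hq
  rw [hq']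
  ring
end
end

section
/- Assume the subset LCM assumption (for every F ⊂ I and j ∈ F^c, E(x_j | X_F) = E(x_j X_Fᵀ)Σ_F^{-1}X_F a.s.) and assume that for each i = 1,…,q, the coordinates of β_i outside the active set A vanish (β_{i,j} = 0 for all j ∉ A). Then for any index set F with F^c ∩ A ≠ ∅, max_{j ∈ F^c∩A} { trace(M^SIR_{F∪{j}}) − trace(M^SIR_F) } ≥ λ_q · λ_max(Σ)^{-1} · λ_min(Σ)² · β_min², where λ_max(Σ) and λ_min(Σ) are the largest and smallest eigenvalues of Σ. -/
open MeasureTheory ProbabilityTheory Matrix Filter Finset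
open scoped BigOperators ENNReal

noncomputable section

open TracePursuit


section AuxTP


private lemma tp_sum_insert {α : Type*} [DecidableEq α] {F : Finset α} {j : α} (hj : j ∉ F)
    (f : ↥(insert j F) → ℝ) :
    ∑ t, f t = f ⟨j, Finset.mem_insert_self j F⟩
      + ∑ i : ↥F, f ⟨i.1, Finset.mem_insert_of_mem i.2⟩ := by
  have hni : (⟨j, Finset.mem_insert_self j F⟩ : ↥(insert j F)) ∉
      F.attach.image (fun x => (⟨x.1, Finset.mem_insert_of_mem x.2⟩ : ↥(insert j F))) := by
    simp only [Finset.mem_image, not_exists]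
    rintro x ⟨-, hx⟩
    have : (x.1 : α) = j := congrArg Subtype.val hx
    exact hj (this ▸ x.2)
  rw [Finset.univ_eq_attach, Finset.attach_insert, Finset.sum_insert hni]
  congr 1
  rw [Finset.univ_eq_attach]
  exact Finset.sum_image fun x _ y _ h =>
    Subtype.ext (by simpa using congrArg Subtype.val h)

private lemma tp_sum_val {α : Type*} (F : Finset α) (f : α → ℝ) :
    ∑ i : ↥F, f i.1 = ∑ k ∈ F, f k := by
  rw [Finset.univ_eq_attach]; exact Finset.sum_attach F f

private lemma tp_sum_univ {p : ℕ} (f : Fin p → ℝ) :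
    ∑ t : ↥(Finset.univ : Finset (Fin p)), f t.1 = ∑ k : Fin p, f k :=
  tp_sum_val _ f

private lemma tp_sum_split {p : ℕ} {F : Finset (Fin p)} {j : Fin p} (hj : j ∉ F) (f : Fin p → ℝ)
    (hsupp : ∀ l, l ≠ j → l ∉ F → f l = 0) :
    ∑ l : Fin p, f l = f j + ∑ l ∈ F, f l := by
  rw [← Finset.sum_insert hj]
  symm
  apply Finset.sum_subset (Finset.subset_univ _)
  intro l _ hl
  rw [Finset.mem_insert] at hl
  push_neg at hl
  exact hsupp l hl.1 hl.2

private lemma tp_dot_swap {n : Type*} [Fintype n] {M : Matrix n n ℝ} (hM : ∀ a b, M a b = M b a)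
    (x y : n → ℝ) : x ⬝ᵥ M.mulVec y = y ⬝ᵥ M.mulVec x := by
  simp only [dotProduct, Matrix.mulVec, Finset.mul_sum]
  rw [Finset.sum_comm]
  exact Finset.sum_congr rfl fun a _ => Finset.sum_congr rfl fun b _ => by rw [hM b a]; ring

private lemma tp_dot_vecMulVec {n : Type*} [Fintype n] (u x : n → ℝ) :
    x ⬝ᵥ (Matrix.vecMulVec u u).mulVec x = (u ⬝ᵥ x) ^ 2 := by
  simp only [dotProduct, Matrix.mulVec, Matrix.vecMulVec_apply, sq]
  calc ∑ a, x a * ∑ b, (u a * u b) * x b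
      = ∑ a, (u a * x a) * ∑ b, u b * x b := by
        refine Finset.sum_congr rfl fun a _ => ?_
        rw [Finset.mul_sum, Finset.mul_sum]
        exact Finset.sum_congr rfl fun b _ => by ring
    _ = (∑ a, u a * x a) * ∑ b, u b * x b := by rw [Finset.sum_mul]

private lemma tp_dot_sum_mulVec {n ι : Type*} [Fintype n] [Fintype ι] (M : ι → Matrix n n ℝ)
    (x y : n → ℝ) : x ⬝ᵥ (∑ h, M h).mulVec y = ∑ h, x ⬝ᵥ (M h).mulVec y := by
  calc x ⬝ᵥ (∑ h, M h).mulVec y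
      = ∑ a, ∑ h : ι, ∑ b, x a * (M h a b * y b) := by
        simp only [dotProduct, Matrix.mulVec, Matrix.sum_apply, Finset.sum_mul,
          Finset.mul_sum]
        exact Finset.sum_congr rfl fun a _ => Finset.sum_comm
    _ = ∑ h : ι, ∑ a, ∑ b, x a * (M h a b * y b) := Finset.sum_comm
    _ = ∑ h, x ⬝ᵥ (M h).mulVec y := by
        simp only [dotProduct, Matrix.mulVec, Finset.mul_sum]

private lemma tp_dot_smul_mulVec {n : Type*} [Fintype n] (r : ℝ) (M : Matrix n n ℝ)
    (x y : n → ℝ) : x ⬝ᵥ (r • M).mulVec y = r * (x ⬝ᵥ M.mulVec y) := by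
  simp only [dotProduct, Matrix.mulVec, Matrix.smul_apply, smul_eq_mul,
    Finset.mul_sum, Finset.sum_mul]
  exact Finset.sum_congr rfl fun a _ => Finset.sum_congr rfl fun b _ => by ring

private lemma tp_mulVec_lincomb {n : Type*} [Fintype n] {p : ℕ} (M : Matrix n n ℝ)
    (G : Finset (Fin p)) (w : Fin p → ℝ) (b : Fin p → n → ℝ) :
    M.mulVec (fun t => ∑ j ∈ G, w j * b j t) = fun t => ∑ j ∈ G, w j * M.mulVec (b j) t := by
  funext t
  simp only [Matrix.mulVec, dotProduct, Finset.mul_sum]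
  rw [Finset.sum_comm]
  exact Finset.sum_congr rfl fun j _ => Finset.sum_congr rfl fun a _ => by ring


private lemma tp_g_symm {Ω : Type*} [MeasurableSpace Ω] (μ : Measure Ω) {p : ℕ}
    (X : Ω → Fin p → ℝ) (a b : Fin p) :
    (∫ ω, X ω a * X ω b ∂μ) = ∫ ω, X ω b * X ω a ∂μ := by
  congr 1; funext ω; ring

private lemma tp_covM_symm {Ω : Type*} [MeasurableSpace Ω] (μ : Measure Ω) {p : ℕ}
    (X : Ω → Fin p → ℝ) (F : Finset (Fin p)) (a b : ↥F) :
    covM μ X F a b = covM μ X F b a :=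
  tp_g_symm μ X a.1 b.1

private lemma tp_schur {Ω : Type*} [MeasurableSpace Ω] (μ : Measure Ω) {p : ℕ}
    (X : Ω → Fin p → ℝ) (F : Finset (Fin p)) {j : Fin p} (hj : j ∉ F)
    (hdet : IsUnit (covM μ X F).det)
    (hs : ((∫ ω, X ω j * X ω j ∂μ)
        - (fun i : ↥F => ∫ ω, X ω j * X ω i.1 ∂μ) ⬝ᵥ thetaJF μ X F j) ≠ 0)
    (u : ↥(insert j F) → ℝ) :
    u ⬝ᵥ (covM μ X (insert j F))⁻¹.mulVec u
      = (fun i : ↥F => u ⟨i.1, Finset.mem_insert_of_mem i.2⟩) ⬝ᵥ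
          (covM μ X F)⁻¹.mulVec (fun i : ↥F => u ⟨i.1, Finset.mem_insert_of_mem i.2⟩)
        + ((∫ ω, X ω j * X ω j ∂μ)
            - (fun i : ↥F => ∫ ω, X ω j * X ω i.1 ∂μ) ⬝ᵥ thetaJF μ X F j)⁻¹
          * (u ⟨j, Finset.mem_insert_self j F⟩
              - thetaJF μ X F j ⬝ᵥ fun i : ↥F => u ⟨i.1, Finset.mem_insert_of_mem i.2⟩) ^ 2 := by
  classical
  set A : Matrix ↥F ↥F ℝ := covM μ X F with hA
  set c : ↥F → ℝ := fun i => ∫ ω, X ω j * X ω i.1 ∂μ with hc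
  set θ : ↥F → ℝ := thetaJF μ X F j with hθ
  set s : ℝ := (∫ ω, X ω j * X ω j ∂μ) - c ⬝ᵥ θ with hsdef
  have hcθ : c ⬝ᵥ θ = ∑ i : ↥F, c i * θ i := rfl
  have hAθ : A.mulVec θ = c := by
    rw [hθ, show thetaJF μ X F j = A⁻¹.mulVec c from rfl, Matrix.mulVec_mulVec,
      Matrix.mul_nonsing_inv _ hdet, Matrix.one_mulVec]
  have hAθ' : ∀ a : ↥F, (∑ i : ↥F, A a i * θ i) = c a := fun a => by
    have := congrFun hAθ a
    simpa [Matrix.mulVec, dotProduct] using this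
  have hAsymm : ∀ a b : ↥F, A a b = A b a := tp_covM_symm μ X F
  have hAinv_symm : ∀ a b : ↥F, A⁻¹ a b = A⁻¹ b a := by
    have ht : Aᵀ = A := by ext a b; exact hAsymm b a
    intro a b
    have h2 : A⁻¹ᵀ = A⁻¹ := by rw [Matrix.transpose_nonsing_inv, ht]
    calc A⁻¹ a b = A⁻¹ᵀ b a := rfl
      _ = A⁻¹ b a := by rw [h2]
  have hAA : ∀ a b : ↥F, (∑ i : ↥F, A a i * A⁻¹ i b) = if a = b then 1 else 0 := by
    intro a b
    have := congrFun (congrFun (Matrix.mul_nonsing_inv A hdet) a) b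
    simpa [Matrix.mul_apply, Matrix.one_apply] using this
  have hcA : ∀ b : ↥F, (∑ i : ↥F, c i * A⁻¹ i b) = θ b := by
    intro b
    have h1 : θ b = ∑ i : ↥F, A⁻¹ b i * c i := by
      rw [hθ, show thetaJF μ X F j = A⁻¹.mulVec c from rfl]
      simp [Matrix.mulVec, dotProduct]
    rw [h1]
    exact Finset.sum_congr rfl fun i _ => by rw [hAinv_symm i b]; ring
  set r : ↥(insert j F) → ℝ := fun t => if ht : t.1 ∈ F then -θ ⟨t.1, ht⟩ else 1 with hr
  set P : Matrix ↥(insert j F) ↥(insert j F) ℝ := Matrix.of fun t t' =>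
    if ht : t.1 ∈ F then (if ht' : t'.1 ∈ F then A⁻¹ ⟨t.1, ht⟩ ⟨t'.1, ht'⟩ else 0) else 0 with hP
  set N : Matrix ↥(insert j F) ↥(insert j F) ℝ :=
    Matrix.of fun t t' => P t t' + s⁻¹ * (r t * r t') with hN
  have hrapp : ∀ t : ↥(insert j F), r t = if ht : t.1 ∈ F then -θ ⟨t.1, ht⟩ else 1 :=
    fun t => by rw [hr]
  have hPapp : ∀ t t' : ↥(insert j F), P t t'
      = if ht : t.1 ∈ F then (if ht' : t'.1 ∈ F then A⁻¹ ⟨t.1, ht⟩ ⟨t'.1, ht'⟩ else 0) else 0 :=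
    fun t t' => by rw [hP]; rfl
  have hNapp : ∀ t t' : ↥(insert j F), N t t' = P t t' + s⁻¹ * (r t * r t') :=
    fun t t' => by rw [hN]; rfl
  have hcov : ∀ t t' : ↥(insert j F), covM μ X (insert j F) t t' = ∫ ω, X ω t.1 * X ω t'.1 ∂μ :=
    fun _ _ => rfl
  have hval_ne : ∀ t : ↥(insert j F), t.1 ∉ F → t.1 = j := fun t ht =>
    (Finset.mem_insert.mp t.2).resolve_right ht
  have hr_j : r ⟨j, Finset.mem_insert_self j F⟩ = 1 := by rw [hrapp]; exact dif_neg hj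
  have hr_e : ∀ i : ↥F, r ⟨i.1, Finset.mem_insert_of_mem i.2⟩ = -θ i := fun i => by
    rw [hrapp]; exact dif_pos i.2
  have hP_jrow : ∀ t' : ↥(insert j F), P ⟨j, Finset.mem_insert_self j F⟩ t' = 0 := fun t' => by
    rw [hPapp]; exact dif_neg hj
  have hP_jcol : ∀ t : ↥(insert j F), P t ⟨j, Finset.mem_insert_self j F⟩ = 0 := fun t => by
    rw [hPapp]
    by_cases ht : t.1 ∈ F
    · rw [dif_pos ht]; exact dif_neg hj
    · exact dif_neg ht
  have hP_e : ∀ i i' : ↥F, P ⟨i.1, Finset.mem_insert_of_mem i.2⟩ ⟨i'.1, Finset.mem_insert_of_mem i'.2⟩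
      = A⁻¹ i i' := fun i i' => by
    rw [hPapp, dif_pos i.2, dif_pos i'.2]
  have hss : s * s⁻¹ = 1 := mul_inv_cancel₀ hs
  -- the weighted sums against `r`
  have hS2 : ∀ t : ↥(insert j F),
      (∑ t' : ↥(insert j F), covM μ X (insert j F) t t' * r t') = if t.1 ∈ F then 0 else s := by
    intro t
    rw [tp_sum_insert hj (f := fun t' : ↥(insert j F) => covM μ X (insert j F) t t' * r t')]
    by_cases ht : t.1 ∈ F
    · have h1 : (∫ ω, X ω t.1 * X ω j ∂μ) = c ⟨t.1, ht⟩ := tp_g_symm μ X t.1 j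
      rw [if_pos ht]
      calc covM μ X (insert j F) t ⟨j, Finset.mem_insert_self j F⟩ * r ⟨j, Finset.mem_insert_self j F⟩
            + ∑ i : ↥F, covM μ X (insert j F) t ⟨i.1, Finset.mem_insert_of_mem i.2⟩ *
                r ⟨i.1, Finset.mem_insert_of_mem i.2⟩
          = c ⟨t.1, ht⟩ + ∑ i : ↥F, -(A ⟨t.1, ht⟩ i * θ i) := by
            rw [hr_j, hcov, h1, mul_one]
            congr 1
            refine Finset.sum_congr rfl fun i _ => ?_
            rw [hr_e i, hcov]
            show (∫ ω, X ω t.1 * X ω i.1 ∂μ) * (-θ i) = -(A ⟨t.1, ht⟩ i * θ i)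
            rw [show (∫ ω, X ω t.1 * X ω i.1 ∂μ) = A ⟨t.1, ht⟩ i from rfl]
            ring
        _ = c ⟨t.1, ht⟩ - ∑ i : ↥F, A ⟨t.1, ht⟩ i * θ i := by
            rw [Finset.sum_neg_distrib]; ring
        _ = 0 := by rw [hAθ']; ring
    · have htj : t.1 = j := hval_ne t ht
      rw [if_neg ht]
      calc covM μ X (insert j F) t ⟨j, Finset.mem_insert_self j F⟩ * r ⟨j, Finset.mem_insert_self j F⟩
            + ∑ i : ↥F, covM μ X (insert j F) t ⟨i.1, Finset.mem_insert_of_mem i.2⟩ *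
                r ⟨i.1, Finset.mem_insert_of_mem i.2⟩
          = (∫ ω, X ω j * X ω j ∂μ) + ∑ i : ↥F, -(c i * θ i) := by
            rw [hr_j, hcov, htj, mul_one]
            congr 1
            refine Finset.sum_congr rfl fun i _ => ?_
            rw [hr_e i, hcov]
            show (∫ ω, X ω t.1 * X ω i.1 ∂μ) * (-θ i) = -(c i * θ i)
            rw [htj, show (∫ ω, X ω j * X ω i.1 ∂μ) = c i from rfl]
            ring
        _ = (∫ ω, X ω j * X ω j ∂μ) - ∑ i : ↥F, c i * θ i := by
            rw [Finset.sum_neg_distrib]; ring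
        _ = s := by rw [hsdef, hcθ]
  -- the weighted sums against columns of `P`
  have hS1 : ∀ (t : ↥(insert j F)) (b : ↥F),
      (∑ t' : ↥(insert j F), covM μ X (insert j F) t t' *
          P t' ⟨b.1, Finset.mem_insert_of_mem b.2⟩)
        = if ht : t.1 ∈ F then (if (⟨t.1, ht⟩ : ↥F) = b then 1 else 0) else θ b := by
    intro t b
    rw [tp_sum_insert hj (f := fun t' : ↥(insert j F) => covM μ X (insert j F) t t' *
      P t' ⟨b.1, Finset.mem_insert_of_mem b.2⟩)]
    rw [hP_jrow, mul_zero, zero_add]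
    by_cases ht : t.1 ∈ F
    · rw [dif_pos ht]
      calc (∑ i : ↥F, covM μ X (insert j F) t ⟨i.1, Finset.mem_insert_of_mem i.2⟩ *
              P ⟨i.1, Finset.mem_insert_of_mem i.2⟩ ⟨b.1, Finset.mem_insert_of_mem b.2⟩)
          = ∑ i : ↥F, A ⟨t.1, ht⟩ i * A⁻¹ i b := by
            refine Finset.sum_congr rfl fun i _ => ?_
            rw [hP_e i b]; rfl
        _ = if (⟨t.1, ht⟩ : ↥F) = b then 1 else 0 := hAA _ b
    · have htj : t.1 = j := hval_ne t ht
      rw [dif_neg ht]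
      calc (∑ i : ↥F, covM μ X (insert j F) t ⟨i.1, Finset.mem_insert_of_mem i.2⟩ *
              P ⟨i.1, Finset.mem_insert_of_mem i.2⟩ ⟨b.1, Finset.mem_insert_of_mem b.2⟩)
          = ∑ i : ↥F, c i * A⁻¹ i b := by
            refine Finset.sum_congr rfl fun i _ => ?_
            rw [hP_e i b, hcov]
            show (∫ ω, X ω t.1 * X ω i.1 ∂μ) * A⁻¹ i b = c i * A⁻¹ i b
            rw [htj, show (∫ ω, X ω j * X ω i.1 ∂μ) = c i from rfl]
        _ = θ b := hcA b
  have hright : covM μ X (insert j F) * N = 1 := by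
    ext t t''
    rw [Matrix.mul_apply]
    have hsplit : ∀ t' : ↥(insert j F), covM μ X (insert j F) t t' * N t' t''
        = covM μ X (insert j F) t t' * P t' t''
          + (covM μ X (insert j F) t t' * r t') * (s⁻¹ * r t'') := fun t' => by
      rw [hNapp]; ring
    rw [Finset.sum_congr rfl fun t' _ => hsplit t', Finset.sum_add_distrib, ← Finset.sum_mul,
      hS2 t]
    by_cases ht'' : t''.1 ∈ F
    · have ht''e : (⟨(⟨t''.1, ht''⟩ : ↥F).1,
          Finset.mem_insert_of_mem (⟨t''.1, ht''⟩ : ↥F).2⟩ : ↥(insert j F)) = t'' :=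
        Subtype.ext rfl
      have hcol := hS1 t ⟨t''.1, ht''⟩
      rw [ht''e] at hcol
      rw [hcol, hrapp t'', dif_pos ht'']
      by_cases ht : t.1 ∈ F
      · rw [dif_pos ht, if_pos ht]
        by_cases hv : t = t''
        · have hv' : (t : Fin p) = (t'' : Fin p) := congrArg Subtype.val hv
          rw [if_pos (show (⟨t.1, ht⟩ : ↥F) = ⟨t''.1, ht''⟩ from Subtype.ext hv'), hv,
            Matrix.one_apply_eq]
          ring
        · rw [if_neg (show ¬((⟨t.1, ht⟩ : ↥F) = ⟨t''.1, ht''⟩) from fun h => hv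
            (Subtype.ext (congrArg (Subtype.val : ↥F → Fin p) h))),
            Matrix.one_apply_ne hv]
          ring
      · rw [dif_neg ht, if_neg ht, Matrix.one_apply_ne
          (fun h => ht (by rw [congrArg Subtype.val h]; exact ht''))]
        linear_combination (-(θ (⟨t''.1, ht''⟩ : ↥F))) * hss
    · have ht''j : t'' = ⟨j, Finset.mem_insert_self j F⟩ := Subtype.ext (hval_ne t'' ht'')
      rw [ht''j, hr_j]
      have hzero : (∑ t' : ↥(insert j F), covM μ X (insert j F) t t' *
          P t' ⟨j, Finset.mem_insert_self j F⟩) = 0 := by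
        rw [Finset.sum_congr rfl fun t' _ => by rw [hP_jcol t', mul_zero]]
        exact Finset.sum_const_zero
      rw [hzero]
      by_cases ht : t.1 ∈ F
      · rw [if_pos ht, Matrix.one_apply_ne (fun h => hj (by
          have : t.1 = j := congrArg Subtype.val h
          rw [← this]; exact ht))]
        ring
      · have hteq : t = ⟨j, Finset.mem_insert_self j F⟩ := Subtype.ext (hval_ne t ht)
        rw [if_neg ht, hteq, Matrix.one_apply_eq]
        linear_combination hss
  have hNinv : (covM μ X (insert j F))⁻¹ = N := Matrix.inv_eq_right_inv hright
  rw [hNinv]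
  set d : ℝ := θ ⬝ᵥ fun i : ↥F => u ⟨i.1, Finset.mem_insert_of_mem i.2⟩ with hd
  have hdsum : d = ∑ i : ↥F, θ i * u ⟨i.1, Finset.mem_insert_of_mem i.2⟩ := rfl
  have hru : (∑ t : ↥(insert j F), r t * u t) = u ⟨j, Finset.mem_insert_self j F⟩ - d := by
    rw [tp_sum_insert hj (f := fun t : ↥(insert j F) => r t * u t), hr_j, one_mul]
    have h1 : (∑ i : ↥F, r ⟨i.1, Finset.mem_insert_of_mem i.2⟩ *
          u ⟨i.1, Finset.mem_insert_of_mem i.2⟩)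
        = ∑ i : ↥F, -(θ i * u ⟨i.1, Finset.mem_insert_of_mem i.2⟩) :=
      Finset.sum_congr rfl fun i _ => by rw [hr_e i, neg_mul]
    rw [h1, Finset.sum_neg_distrib, hdsum]
    ring
  have hQrow : ∀ i : ↥F, (∑ t' : ↥(insert j F), P ⟨i.1, Finset.mem_insert_of_mem i.2⟩ t' * u t')
      = ∑ i' : ↥F, A⁻¹ i i' * u ⟨i'.1, Finset.mem_insert_of_mem i'.2⟩ := by
    intro i
    rw [tp_sum_insert hj (f := fun t' : ↥(insert j F) =>
      P ⟨i.1, Finset.mem_insert_of_mem i.2⟩ t' * u t'), hP_jcol, zero_mul, zero_add]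
    exact Finset.sum_congr rfl fun i' _ => by rw [hP_e i i']
  have hinner : ∀ t : ↥(insert j F), (∑ t' : ↥(insert j F), N t t' * u t')
      = (∑ t' : ↥(insert j F), P t t' * u t')
        + r t * (s⁻¹ * (u ⟨j, Finset.mem_insert_self j F⟩ - d)) := by
    intro t
    have h1 : (∑ t' : ↥(insert j F), N t t' * u t')
        = ∑ t' : ↥(insert j F), (P t t' * u t' + (s⁻¹ * r t) * (r t' * u t')) :=
      Finset.sum_congr rfl fun t' _ => by rw [hNapp t t']; ring
    rw [h1, Finset.sum_add_distrib, ← Finset.mul_sum, hru]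
    ring
  have hmain : u ⬝ᵥ N.mulVec u
      = (∑ t : ↥(insert j F), u t * ∑ t' : ↥(insert j F), P t t' * u t')
        + (u ⟨j, Finset.mem_insert_self j F⟩ - d) *
            (s⁻¹ * (u ⟨j, Finset.mem_insert_self j F⟩ - d)) := by
    have h0 : u ⬝ᵥ N.mulVec u
        = ∑ t : ↥(insert j F), u t * ∑ t' : ↥(insert j F), N t t' * u t' := by
      simp [dotProduct, Matrix.mulVec]
    have h1 : ∀ t : ↥(insert j F), u t * (∑ t' : ↥(insert j F), N t t' * u t')
        = u t * (∑ t' : ↥(insert j F), P t t' * u t')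
          + (r t * u t) * (s⁻¹ * (u ⟨j, Finset.mem_insert_self j F⟩ - d)) := fun t => by
      rw [hinner t]; ring
    rw [h0, Finset.sum_congr rfl fun t _ => h1 t, Finset.sum_add_distrib, ← Finset.sum_mul, hru]
  have hQ : (∑ t : ↥(insert j F), u t * ∑ t' : ↥(insert j F), P t t' * u t')
      = (fun i : ↥F => u ⟨i.1, Finset.mem_insert_of_mem i.2⟩) ⬝ᵥ
          A⁻¹.mulVec (fun i : ↥F => u ⟨i.1, Finset.mem_insert_of_mem i.2⟩) := by
    rw [tp_sum_insert hj (f := fun t : ↥(insert j F) =>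
      u t * ∑ t' : ↥(insert j F), P t t' * u t')]
    have hz : (∑ t' : ↥(insert j F), P ⟨j, Finset.mem_insert_self j F⟩ t' * u t') = 0 :=
      Finset.sum_eq_zero fun t' _ => by rw [hP_jrow t', zero_mul]
    rw [hz, mul_zero, zero_add]
    have h2 : (∑ i : ↥F, u ⟨i.1, Finset.mem_insert_of_mem i.2⟩ *
          ∑ t' : ↥(insert j F), P ⟨i.1, Finset.mem_insert_of_mem i.2⟩ t' * u t')
        = ∑ i : ↥F, u ⟨i.1, Finset.mem_insert_of_mem i.2⟩ *
            ∑ i' : ↥F, A⁻¹ i i' * u ⟨i'.1, Finset.mem_insert_of_mem i'.2⟩ :=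
      Finset.sum_congr rfl fun i _ => by rw [hQrow i]
    rw [h2]
    simp [dotProduct, Matrix.mulVec, Finset.mul_sum]
  rw [hmain, hQ]
  ring

private lemma tp_dot_self_pos {n : Type*} [Fintype n] {v : n → ℝ} (hv : v ≠ 0) :
    0 < v ⬝ᵥ v := by
  obtain ⟨i, hi⟩ := Function.ne_iff.mp hv
  have h1 : ∀ a : n, 0 ≤ v a * v a := fun a => mul_self_nonneg _
  have h2 : 0 < v i * v i := by
    rcases lt_or_gt_of_ne hi with h | h
    · exact mul_pos_of_neg_of_neg h h
    · exact mul_pos h h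
  exact Finset.sum_pos' (fun a _ => h1 a) ⟨i, Finset.mem_univ i, h2⟩

private lemma tp_symm_shift {n : Type*} [Fintype n] {S : Matrix n n ℝ}
    (hS : ∀ a b, S a b = S b a) (x y : n → ℝ) :
    S.mulVec x ⬝ᵥ y = x ⬝ᵥ S.mulVec y := by
  simp only [dotProduct, Matrix.mulVec, Finset.sum_mul, Finset.mul_sum]
  rw [Finset.sum_comm]
  exact Finset.sum_congr rfl fun a _ => Finset.sum_congr rfl fun b _ => by rw [hS b a]; ring

private lemma tp_trace_vecMulVec {n : Type*} [Fintype n] (B : Matrix n n ℝ) (u : n → ℝ) :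
    (B * Matrix.vecMulVec u u).trace = u ⬝ᵥ B.mulVec u := by
  simp only [Matrix.trace, Matrix.diag_apply, Matrix.mul_apply, Matrix.vecMulVec_apply,
    dotProduct, Matrix.mulVec, Finset.mul_sum]
  exact Finset.sum_congr rfl fun a _ => Finset.sum_congr rfl fun b _ => by ring

private lemma tp_trace_MSIR {Ω : Type*} [MeasurableSpace Ω] (μ : Measure Ω) {p H : ℕ}
    (X : Ω → Fin p → ℝ) (Y : Ω → ℝ) (J : Fin H → Set ℝ) (F : Finset (Fin p))
    (S : Matrix ↥F ↥F ℝ) (hS : S * S = (covM μ X F)⁻¹) :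
    (MSIR μ X Y J F S).trace
      = ∑ h, sliceP μ Y J h *
          (sliceU μ X Y J F h ⬝ᵥ (covM μ X F)⁻¹.mulVec (sliceU μ X Y J F h)) := by
  unfold MSIR
  rw [Matrix.trace_mul_cycle, hS, Matrix.mul_sum, Matrix.trace_sum]
  refine Finset.sum_congr rfl fun h _ => ?_
  rw [Matrix.mul_smul, Matrix.trace_smul, tp_trace_vecMulVec]
  simp [smul_eq_mul]

private lemma tp_quad_spec {n : Type*} [Fintype n] {H : ℕ} (P : Fin H → ℝ) (U : Fin H → n → ℝ)
    (x : n → ℝ) :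
    x ⬝ᵥ (∑ h, P h • Matrix.vecMulVec (U h) (U h)).mulVec x = ∑ h, P h * (U h ⬝ᵥ x) ^ 2 := by
  rw [tp_dot_sum_mulVec]
  exact Finset.sum_congr rfl fun h _ => by rw [tp_dot_smul_mulVec, tp_dot_vecMulVec]

private lemma tp_covM_posdef {Ω : Type*} [MeasurableSpace Ω] (μ : Measure Ω) {p : ℕ}
    (X : Ω → Fin p → ℝ) (hpos : (covM μ X Finset.univ).PosDef) (G : Finset (Fin p)) :
    (covM μ X G).PosDef := by
  rw [Matrix.posDef_iff_dotProduct_mulVec]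
  constructor
  · show (covM μ X G)ᴴ = covM μ X G
    ext a b
    rw [Matrix.conjTranspose_apply, star_trivial]
    exact tp_covM_symm μ X G b a
  · intro x hx
    set x' : Fin p → ℝ := fun k => if h : k ∈ G then x ⟨k, h⟩ else 0 with hx'
    set xt : ↥(Finset.univ : Finset (Fin p)) → ℝ := fun t => x' t.1 with hxt
    have hxG : ∀ i : ↥G, x' i.1 = x i := fun i => dif_pos i.2
    have hxN : ∀ k, k ∉ G → x' k = 0 := fun k hk => dif_neg hk
    have hxtne : xt ≠ 0 := by
      obtain ⟨i, hi⟩ := Function.ne_iff.mp hx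
      refine Function.ne_iff.mpr ⟨⟨i.1, Finset.mem_univ i.1⟩, ?_⟩
      show x' i.1 ≠ 0
      rw [hxG i]
      exact hi
    have hkey : star x ⬝ᵥ (covM μ X G).mulVec x = star xt ⬝ᵥ (covM μ X Finset.univ).mulVec xt := by
      show x ⬝ᵥ (covM μ X G).mulVec x = xt ⬝ᵥ (covM μ X Finset.univ).mulVec xt
      have hR1 : xt ⬝ᵥ (covM μ X Finset.univ).mulVec xt
          = ∑ k : Fin p, x' k *
              ∑ t' : ↥(Finset.univ : Finset (Fin p)), covM μ X Finset.univ ⟨k, Finset.mem_univ k⟩ t' * xt t' :=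
        tp_sum_univ (fun k => x' k *
          ∑ t' : ↥(Finset.univ : Finset (Fin p)), covM μ X Finset.univ ⟨k, Finset.mem_univ k⟩ t' * xt t')
      have hR2 : ∀ k : Fin p, (∑ t' : ↥(Finset.univ : Finset (Fin p)),
            covM μ X Finset.univ ⟨k, Finset.mem_univ k⟩ t' * xt t')
          = ∑ l : Fin p, (∫ ω, X ω k * X ω l ∂μ) * x' l :=
        fun k => tp_sum_univ (fun l => (∫ ω, X ω k * X ω l ∂μ) * x' l)
      rw [hR1]
      have hR3 : (∑ k : Fin p, x' k * ∑ t' : ↥(Finset.univ : Finset (Fin p)),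
            covM μ X Finset.univ ⟨k, Finset.mem_univ k⟩ t' * xt t')
          = ∑ k : Fin p, x' k * ∑ l : Fin p, (∫ ω, X ω k * X ω l ∂μ) * x' l :=
        Finset.sum_congr rfl fun k _ => by rw [hR2 k]
      rw [hR3]
      have hR4 : (∑ k : Fin p, x' k * ∑ l : Fin p, (∫ ω, X ω k * X ω l ∂μ) * x' l)
          = ∑ k ∈ G, x' k * ∑ l : Fin p, (∫ ω, X ω k * X ω l ∂μ) * x' l := by
        refine (Finset.sum_subset (Finset.subset_univ G) fun k _ hk => ?_).symm
        rw [hxN k hk, zero_mul]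
      have hR5 : ∀ k, (∑ l : Fin p, (∫ ω, X ω k * X ω l ∂μ) * x' l)
          = ∑ l ∈ G, (∫ ω, X ω k * X ω l ∂μ) * x' l := by
        intro k
        refine (Finset.sum_subset (Finset.subset_univ G) fun l _ hl => ?_).symm
        rw [hxN l hl, mul_zero]
      have hR6 : (∑ k ∈ G, x' k * ∑ l : Fin p, (∫ ω, X ω k * X ω l ∂μ) * x' l)
          = ∑ k ∈ G, x' k * ∑ l ∈ G, (∫ ω, X ω k * X ω l ∂μ) * x' l :=
        Finset.sum_congr rfl fun k _ => by rw [hR5 k]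
      rw [hR4, hR6, ← tp_sum_val G (fun k => x' k * ∑ l ∈ G, (∫ ω, X ω k * X ω l ∂μ) * x' l)]
      have hL1 : x ⬝ᵥ (covM μ X G).mulVec x
          = ∑ i : ↥G, x i * ∑ b : ↥G, covM μ X G i b * x b := by
        simp [dotProduct, Matrix.mulVec]
      rw [hL1]
      refine Finset.sum_congr rfl fun i _ => ?_
      rw [hxG i]
      congr 1
      rw [← tp_sum_val G (fun l => (∫ ω, X ω i.1 * X ω l ∂μ) * x' l)]
      exact Finset.sum_congr rfl fun b _ => by rw [hxG b]; rfl
    have := (Matrix.posDef_iff_dotProduct_mulVec.mp hpos).2 hxtne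
    rw [← hkey] at this
    exact this

private def tpTheta {Ω : Type*} [MeasurableSpace Ω] (μ : Measure Ω) {p : ℕ}
    (X : Ω → Fin p → ℝ) (F : Finset (Fin p)) (j k : Fin p) : ℝ :=
  if h : k ∈ F then thetaJF μ X F j ⟨k, h⟩ else 0

private def tpB {Ω : Type*} [MeasurableSpace Ω] (μ : Measure Ω) {p : ℕ}
    (X : Ω → Fin p → ℝ) (F : Finset (Fin p)) (j : Fin p) :
    ↥(Finset.univ : Finset (Fin p)) → ℝ :=
  fun t => if t.1 = j then 1 else -(tpTheta μ X F j t.1)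

private def tpD {Ω : Type*} [MeasurableSpace Ω] (μ : Measure Ω) {p : ℕ}
    (X : Ω → Fin p → ℝ) (F : Finset (Fin p)) (j k : Fin p) : ℝ :=
  (covM μ X Finset.univ).mulVec (tpB μ X F j) ⟨k, Finset.mem_univ k⟩

private def tpS {Ω : Type*} [MeasurableSpace Ω] (μ : Measure Ω) {p : ℕ}
    (X : Ω → Fin p → ℝ) (F : Finset (Fin p)) (j : Fin p) : ℝ :=
  (∫ ω, X ω j * X ω j ∂μ)
    - (fun i : ↥F => ∫ ω, X ω j * X ω i.1 ∂μ) ⬝ᵥ thetaJF μ X F j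

private lemma tp_Atheta {Ω : Type*} [MeasurableSpace Ω] (μ : Measure Ω) {p : ℕ}
    (X : Ω → Fin p → ℝ) {F : Finset (Fin p)} (hdet : IsUnit (covM μ X F).det)
    (j : Fin p) (a : ↥F) :
    (∑ i : ↥F, covM μ X F a i * thetaJF μ X F j i) = ∫ ω, X ω j * X ω a.1 ∂μ := by
  have h1 : (covM μ X F).mulVec (thetaJF μ X F j) = fun i : ↥F => ∫ ω, X ω j * X ω i.1 ∂μ := by
    rw [show thetaJF μ X F j
        = (covM μ X F)⁻¹.mulVec (fun i : ↥F => ∫ ω, X ω j * X ω i.1 ∂μ) from rfl,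
      Matrix.mulVec_mulVec, Matrix.mul_nonsing_inv _ hdet, Matrix.one_mulVec]
  have := congrFun h1 a
  simpa [Matrix.mulVec, dotProduct] using this

private lemma tp_d_expand {Ω : Type*} [MeasurableSpace Ω] (μ : Measure Ω) {p : ℕ}
    (X : Ω → Fin p → ℝ) (F : Finset (Fin p)) (j k : Fin p) :
    tpD μ X F j k
      = ∑ l : Fin p, (∫ ω, X ω k * X ω l ∂μ) * (if l = j then 1 else -(tpTheta μ X F j l)) :=
  tp_sum_univ (fun l => (∫ ω, X ω k * X ω l ∂μ) * (if l = j then 1 else -(tpTheta μ X F j l)))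

private lemma tp_d_zero {Ω : Type*} [MeasurableSpace Ω] (μ : Measure Ω) {p : ℕ}
    (X : Ω → Fin p → ℝ) {F : Finset (Fin p)} {j : Fin p} (hj : j ∉ F)
    (hdet : IsUnit (covM μ X F).det) {k : Fin p} (hk : k ∈ F) :
    tpD μ X F j k = 0 := by
  rw [tp_d_expand, tp_sum_split hj _ (fun l hlj hlF => by
    rw [if_neg hlj, show tpTheta μ X F j l = 0 from dif_neg hlF, neg_zero, mul_zero])]
  rw [if_pos rfl, mul_one]
  have h2 : (∑ l ∈ F, (∫ ω, X ω k * X ω l ∂μ) * (if l = j then 1 else -(tpTheta μ X F j l)))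
      = ∑ i : ↥F, -(covM μ X F ⟨k, hk⟩ i * thetaJF μ X F j i) := by
    rw [← tp_sum_val F (fun l => (∫ ω, X ω k * X ω l ∂μ) * (if l = j then 1 else -(tpTheta μ X F j l)))]
    refine Finset.sum_congr rfl fun i _ => ?_
    rw [if_neg (show i.1 ≠ j from fun h => hj (h ▸ i.2)),
      show tpTheta μ X F j i.1 = thetaJF μ X F j ⟨i.1, i.2⟩ from dif_pos i.2]
    show (∫ ω, X ω k * X ω i.1 ∂μ) * -(thetaJF μ X F j i) = -(covM μ X F ⟨k, hk⟩ i * thetaJF μ X F j i)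
    rw [show (∫ ω, X ω k * X ω i.1 ∂μ) = covM μ X F ⟨k, hk⟩ i from rfl]
    ring
  rw [h2, Finset.sum_neg_distrib]
  have h3 : (∑ i : ↥F, covM μ X F ⟨k, hk⟩ i * thetaJF μ X F j i) = ∫ ω, X ω j * X ω k ∂μ :=
    tp_Atheta μ X hdet j ⟨k, hk⟩
  rw [h3, tp_g_symm μ X k j]
  ring

private lemma tp_d_diag {Ω : Type*} [MeasurableSpace Ω] (μ : Measure Ω) {p : ℕ}
    (X : Ω → Fin p → ℝ) {F : Finset (Fin p)} {j : Fin p} (hj : j ∉ F) :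
    tpD μ X F j j = tpS μ X F j := by
  rw [tp_d_expand, tp_sum_split hj _ (fun l hlj hlF => by
    rw [if_neg hlj, show tpTheta μ X F j l = 0 from dif_neg hlF, neg_zero, mul_zero])]
  rw [if_pos rfl, mul_one]
  have h2 : (∑ l ∈ F, (∫ ω, X ω j * X ω l ∂μ) * (if l = j then 1 else -(tpTheta μ X F j l)))
      = ∑ i : ↥F, -((∫ ω, X ω j * X ω i.1 ∂μ) * thetaJF μ X F j i) := by
    rw [← tp_sum_val F (fun l => (∫ ω, X ω j * X ω l ∂μ) * (if l = j then 1 else -(tpTheta μ X F j l)))]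
    refine Finset.sum_congr rfl fun i _ => ?_
    rw [if_neg (show i.1 ≠ j from fun h => hj (h ▸ i.2)),
      show tpTheta μ X F j i.1 = thetaJF μ X F j ⟨i.1, i.2⟩ from dif_pos i.2]
    ring
  rw [h2, Finset.sum_neg_distrib, tpS]
  have h3 : (fun i : ↥F => ∫ ω, X ω j * X ω i.1 ∂μ) ⬝ᵥ thetaJF μ X F j
      = ∑ i : ↥F, (∫ ω, X ω j * X ω i.1 ∂μ) * thetaJF μ X F j i := rfl
  rw [h3]
  ring

private lemma tp_b_dot {Ω : Type*} [MeasurableSpace Ω] (μ : Measure Ω) {p : ℕ}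
    (X : Ω → Fin p → ℝ) {F : Finset (Fin p)} {j : Fin p} (hj : j ∉ F)
    (hdet : IsUnit (covM μ X F).det) {k : Fin p} (hk : k ∉ F) :
    tpB μ X F k ⬝ᵥ (covM μ X Finset.univ).mulVec (tpB μ X F j) = tpD μ X F j k := by
  have h1 : tpB μ X F k ⬝ᵥ (covM μ X Finset.univ).mulVec (tpB μ X F j)
      = ∑ l : Fin p, (if l = k then 1 else -(tpTheta μ X F k l)) * tpD μ X F j l :=
    tp_sum_univ (fun l => (if l = k then 1 else -(tpTheta μ X F k l)) * tpD μ X F j l)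
  rw [h1, tp_sum_split hk _ (fun l hlk hlF => by
    rw [if_neg hlk, show tpTheta μ X F k l = 0 from dif_neg hlF, neg_zero, zero_mul])]
  rw [if_pos rfl, one_mul]
  have h2 : (∑ l ∈ F, (if l = k then 1 else -(tpTheta μ X F k l)) * tpD μ X F j l) = 0 :=
    Finset.sum_eq_zero fun l hl => by rw [tp_d_zero μ X hj hdet hl, mul_zero]
  rw [h2, add_zero]

private lemma tp_s_quad {Ω : Type*} [MeasurableSpace Ω] (μ : Measure Ω) {p : ℕ}
    (X : Ω → Fin p → ℝ) {F : Finset (Fin p)} {j : Fin p} (hj : j ∉ F)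
    (hdet : IsUnit (covM μ X F).det) :
    tpS μ X F j = tpB μ X F j ⬝ᵥ (covM μ X Finset.univ).mulVec (tpB μ X F j) := by
  rw [tp_b_dot μ X hj hdet hj, tp_d_diag μ X hj]

private lemma tp_b_self {Ω : Type*} [MeasurableSpace Ω] (μ : Measure Ω) {p : ℕ}
    (X : Ω → Fin p → ℝ) (F : Finset (Fin p)) (j : Fin p) :
    (1 : ℝ) ≤ tpB μ X F j ⬝ᵥ tpB μ X F j := by
  have h1 : tpB μ X F j ⬝ᵥ tpB μ X F j
      = ∑ t : ↥(Finset.univ : Finset (Fin p)), tpB μ X F j t * tpB μ X F j t := rfl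
  have h2 : tpB μ X F j ⟨j, Finset.mem_univ j⟩ = 1 := if_pos rfl
  have h3 := Finset.single_le_sum (f := fun t : ↥(Finset.univ : Finset (Fin p)) =>
    tpB μ X F j t * tpB μ X F j t) (fun t _ => mul_self_nonneg _)
    (Finset.mem_univ (⟨j, Finset.mem_univ j⟩ : ↥(Finset.univ : Finset (Fin p))))
  rw [h2] at h3
  rw [h1]
  calc (1:ℝ) = 1 * 1 := by ring
    _ ≤ _ := h3

private lemma tp_b_entry {Ω : Type*} [MeasurableSpace Ω] (μ : Measure Ω) {p : ℕ}
    (X : Ω → Fin p → ℝ) (F : Finset (Fin p)) (j : Fin p) {k : Fin p} (hk : k ∉ F) :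
    tpB μ X F j ⟨k, Finset.mem_univ k⟩ = if k = j then 1 else 0 := by
  by_cases h : k = j
  · rw [if_pos h]; exact if_pos h
  · rw [if_neg h]
    show (if k = j then 1 else -(tpTheta μ X F j k)) = 0
    rw [if_neg h, show tpTheta μ X F j k = 0 from dif_neg hk, neg_zero]

private lemma tp_delta {Ω : Type*} [MeasurableSpace Ω] (μ : Measure Ω) {p H : ℕ}
    (X : Ω → Fin p → ℝ) (Y : Ω → ℝ) (J : Fin H → Set ℝ) {F : Finset (Fin p)} {j : Fin p}
    (hj : j ∉ F) (h : Fin H) :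
    tpB μ X F j ⬝ᵥ sliceU μ X Y J Finset.univ h
      = sliceU μ X Y J (insert j F) h ⟨j, Finset.mem_insert_self j F⟩
        - thetaJF μ X F j ⬝ᵥ sliceU μ X Y J F h := by
  have h1 : tpB μ X F j ⬝ᵥ sliceU μ X Y J Finset.univ h
      = ∑ l : Fin p, (if l = j then 1 else -(tpTheta μ X F j l)) *
          ((∫ ω in Y ⁻¹' J h, X ω l ∂μ) / sliceP μ Y J h) :=
    tp_sum_univ (fun l => (if l = j then 1 else -(tpTheta μ X F j l)) *
      ((∫ ω in Y ⁻¹' J h, X ω l ∂μ) / sliceP μ Y J h))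
  rw [h1, tp_sum_split hj _ (fun l hlj hlF => by
    rw [if_neg hlj, show tpTheta μ X F j l = 0 from dif_neg hlF, neg_zero, zero_mul])]
  rw [if_pos rfl, one_mul]
  have h2 : (∑ l ∈ F, (if l = j then 1 else -(tpTheta μ X F j l)) *
        ((∫ ω in Y ⁻¹' J h, X ω l ∂μ) / sliceP μ Y J h))
      = ∑ i : ↥F, -(thetaJF μ X F j i *
          sliceU μ X Y J (insert j F) h ⟨i.1, Finset.mem_insert_of_mem i.2⟩) := by
    rw [← tp_sum_val F (fun l => (if l = j then 1 else -(tpTheta μ X F j l)) *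
      ((∫ ω in Y ⁻¹' J h, X ω l ∂μ) / sliceP μ Y J h))]
    refine Finset.sum_congr rfl fun i _ => ?_
    rw [if_neg (show i.1 ≠ j from fun hh => hj (hh ▸ i.2)),
      show tpTheta μ X F j i.1 = thetaJF μ X F j ⟨i.1, i.2⟩ from dif_pos i.2]
    show -(thetaJF μ X F j i) * ((∫ ω in Y ⁻¹' J h, X ω i.1 ∂μ) / sliceP μ Y J h) = _
    rw [show sliceU μ X Y J (insert j F) h ⟨i.1, Finset.mem_insert_of_mem i.2⟩
      = (∫ ω in Y ⁻¹' J h, X ω i.1 ∂μ) / sliceP μ Y J h from rfl]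
    ring
  rw [h2, Finset.sum_neg_distrib]
  rw [show sliceU μ X Y J (insert j F) h ⟨j, Finset.mem_insert_self j F⟩
    = (∫ ω in Y ⁻¹' J h, X ω j ∂μ) / sliceP μ Y J h from rfl]
  rw [show thetaJF μ X F j ⬝ᵥ sliceU μ X Y J F h
    = ∑ i : ↥F, thetaJF μ X F j i *
        sliceU μ X Y J (insert j F) h ⟨i.1, Finset.mem_insert_of_mem i.2⟩ from rfl]
  ring

private lemma tp_trace_diff {Ω : Type*} [MeasurableSpace Ω] (μ : Measure Ω) {p H : ℕ}
    (X : Ω → Fin p → ℝ) (Y : Ω → ℝ) (J : Fin H → Set ℝ) {F : Finset (Fin p)} {j : Fin p}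
    (hj : j ∉ F) (hdet : IsUnit (covM μ X F).det) (hs : tpS μ X F j ≠ 0)
    (SF : Matrix ↥F ↥F ℝ) (hSF : SF * SF = (covM μ X F)⁻¹)
    (ST : Matrix ↥(insert j F) ↥(insert j F) ℝ) (hST : ST * ST = (covM μ X (insert j F))⁻¹) :
    (MSIR μ X Y J (insert j F) ST).trace - (MSIR μ X Y J F SF).trace
      = (tpS μ X F j)⁻¹ * ∑ h, sliceP μ Y J h *
          (tpB μ X F j ⬝ᵥ sliceU μ X Y J Finset.univ h) ^ 2 := by
  rw [tp_trace_MSIR μ X Y J (insert j F) ST hST, tp_trace_MSIR μ X Y J F SF hSF,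
    ← Finset.sum_sub_distrib, Finset.mul_sum]
  refine Finset.sum_congr rfl fun h _ => ?_
  rw [tp_schur μ X F hj hdet hs (sliceU μ X Y J (insert j F) h)]
  rw [show (fun i : ↥F => sliceU μ X Y J (insert j F) h ⟨i.1, Finset.mem_insert_of_mem i.2⟩)
    = sliceU μ X Y J F h from rfl]
  rw [← tp_delta μ X Y J hj h]
  rw [show ((∫ ω, X ω j * X ω j ∂μ)
      - (fun i : ↥F => ∫ ω, X ω j * X ω i.1 ∂μ) ⬝ᵥ thetaJF μ X F j) = tpS μ X F j from rfl]
  ring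

private lemma tp_claim {Ω : Type*} [MeasurableSpace Ω] (μ : Measure Ω) {p : ℕ}
    (X : Ω → Fin p → ℝ) (F G : Finset (Fin p)) (hGF : ∀ k ∈ G, k ∉ F)
    (hdet : IsUnit (covM μ X F).det) {lamMin : ℝ} (hlm : 0 < lamMin)
    (hmin : ∀ v : ↥(Finset.univ : Finset (Fin p)) → ℝ,
      lamMin * (v ⬝ᵥ v) ≤ v ⬝ᵥ (covM μ X Finset.univ).mulVec v)
    (w : Fin p → ℝ) :
    lamMin ^ 2 * (∑ k ∈ G, w k ^ 2) ≤ ∑ j ∈ G, (∑ k ∈ G, w k * tpD μ X F j k) ^ 2 := by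
  classical
  have hzlin : (covM μ X Finset.univ).mulVec (fun t => ∑ k ∈ G, w k * tpB μ X F k t)
      = fun t => ∑ k ∈ G, w k * (covM μ X Finset.univ).mulVec (tpB μ X F k) t :=
    tp_mulVec_lincomb _ G w (tpB μ X F)
  have h1 : ∀ j ∈ G, ((fun t => ∑ k ∈ G, w k * tpB μ X F k t) ⬝ᵥ
      (covM μ X Finset.univ).mulVec (tpB μ X F j)) = ∑ k ∈ G, w k * tpD μ X F j k := by
    intro j hjG
    have e1 : ((fun t => ∑ k ∈ G, w k * tpB μ X F k t) ⬝ᵥ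
        (covM μ X Finset.univ).mulVec (tpB μ X F j))
        = ∑ t : ↥(Finset.univ : Finset (Fin p)), ∑ k ∈ G,
            w k * (tpB μ X F k t * (covM μ X Finset.univ).mulVec (tpB μ X F j) t) := by
      refine Finset.sum_congr rfl fun t _ => ?_
      show (∑ k ∈ G, w k * tpB μ X F k t) * (covM μ X Finset.univ).mulVec (tpB μ X F j) t = _
      rw [Finset.sum_mul]
      exact Finset.sum_congr rfl fun k _ => by ring
    rw [e1, Finset.sum_comm]
    refine Finset.sum_congr rfl fun k hk => ?_
    rw [← Finset.mul_sum]
    congr 1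
    exact tp_b_dot μ X (hGF j hjG) hdet (hGF k hk)
  have h2 : ((fun t => ∑ k ∈ G, w k * tpB μ X F k t) ⬝ᵥ (covM μ X Finset.univ).mulVec
      (fun t => ∑ k ∈ G, w k * tpB μ X F k t))
      = ∑ j ∈ G, w j * ∑ k ∈ G, w k * tpD μ X F j k := by
    rw [hzlin]
    have e1 : ((fun t => ∑ k ∈ G, w k * tpB μ X F k t) ⬝ᵥ
        fun t => ∑ k ∈ G, w k * (covM μ X Finset.univ).mulVec (tpB μ X F k) t)
        = ∑ t : ↥(Finset.univ : Finset (Fin p)), ∑ j ∈ G,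
            w j * ((∑ k ∈ G, w k * tpB μ X F k t) *
              (covM μ X Finset.univ).mulVec (tpB μ X F j) t) := by
      refine Finset.sum_congr rfl fun t _ => ?_
      show (∑ k ∈ G, w k * tpB μ X F k t) * (∑ k ∈ G, w k *
          (covM μ X Finset.univ).mulVec (tpB μ X F k) t) = _
      rw [Finset.mul_sum]
      exact Finset.sum_congr rfl fun k _ => by ring
    rw [e1, Finset.sum_comm]
    refine Finset.sum_congr rfl fun j hj => ?_
    rw [← Finset.mul_sum]
    congr 1
    exact h1 j hj
  have h4 : (∑ k ∈ G, w k ^ 2) ≤ ((fun t => ∑ k ∈ G, w k * tpB μ X F k t) ⬝ᵥ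
      (fun t => ∑ k ∈ G, w k * tpB μ X F k t)) := by
    have e2 : ((fun t => ∑ k ∈ G, w k * tpB μ X F k t) ⬝ᵥ
        (fun t => ∑ k ∈ G, w k * tpB μ X F k t))
        = ∑ l : Fin p, (∑ k ∈ G, w k * tpB μ X F k ⟨l, Finset.mem_univ l⟩) *
            (∑ k ∈ G, w k * tpB μ X F k ⟨l, Finset.mem_univ l⟩) :=
      tp_sum_univ (fun l => (∑ k ∈ G, w k * tpB μ X F k ⟨l, Finset.mem_univ l⟩) *
        (∑ k ∈ G, w k * tpB μ X F k ⟨l, Finset.mem_univ l⟩))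
    have h5 : ∀ l ∈ G, (∑ k ∈ G, w k * tpB μ X F k ⟨l, Finset.mem_univ l⟩) = w l := by
      intro l hl
      rw [Finset.sum_eq_single_of_mem l hl (fun k hkG hkl => by
        rw [tp_b_entry μ X F k (hGF l hl), if_neg (fun hh => hkl hh.symm), mul_zero])]
      rw [tp_b_entry μ X F l (hGF l hl), if_pos rfl, mul_one]
    calc (∑ k ∈ G, w k ^ 2)
        = ∑ l ∈ G, (∑ k ∈ G, w k * tpB μ X F k ⟨l, Finset.mem_univ l⟩) *
            (∑ k ∈ G, w k * tpB μ X F k ⟨l, Finset.mem_univ l⟩) := by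
          refine Finset.sum_congr rfl fun l hl => ?_
          rw [h5 l hl, sq]
      _ ≤ ∑ l : Fin p, (∑ k ∈ G, w k * tpB μ X F k ⟨l, Finset.mem_univ l⟩) *
            (∑ k ∈ G, w k * tpB μ X F k ⟨l, Finset.mem_univ l⟩) :=
          Finset.sum_le_sum_of_subset_of_nonneg (Finset.subset_univ G)
            (fun l _ _ => mul_self_nonneg _)
      _ = _ := e2.symm
  have h3 : lamMin * (∑ k ∈ G, w k ^ 2) ≤ ∑ j ∈ G, w j * ∑ k ∈ G, w k * tpD μ X F j k := by
    rw [← h2]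
    exact le_trans (mul_le_mul_of_nonneg_left h4 hlm.le) (hmin _)
  have hCS := Finset.sum_mul_sq_le_sq_mul_sq G (fun j => w j)
    (fun j => ∑ k ∈ G, w k * tpD μ X F j k)
  have htq : (0:ℝ) ≤ ∑ k ∈ G, w k ^ 2 := Finset.sum_nonneg fun k _ => sq_nonneg _
  have hR : (0:ℝ) ≤ ∑ j ∈ G, (∑ k ∈ G, w k * tpD μ X F j k) ^ 2 :=
    Finset.sum_nonneg fun j _ => sq_nonneg _
  rcases eq_or_lt_of_le htq with h0 | h0
  · rw [← h0, mul_zero]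
    exact hR
  · have key : lamMin ^ 2 * (∑ k ∈ G, w k ^ 2) * (∑ k ∈ G, w k ^ 2)
        ≤ (∑ j ∈ G, (∑ k ∈ G, w k * tpD μ X F j k) ^ 2) * (∑ k ∈ G, w k ^ 2) := by
      have hQnn : 0 ≤ lamMin * (∑ k ∈ G, w k ^ 2) := by positivity
      have hsq := mul_self_le_mul_self hQnn h3
      nlinarith [hsq, hCS]
    exact le_of_mul_le_mul_right key h0

end AuxTP

/-- **Proposition 2.** Assume the subset LCM assumption, let
`M^SIR = Σ_{i=1}^q λ_i η_i η_iᵀ` be the spectral decomposition of the SIR kernel matrix with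
`λ_1 ≥ … ≥ λ_q > 0` and orthonormal `η_i`, set `β_i = Σ^{-1/2} η_i`, and assume
`β_{i,j} = 0` for all `j ∉ A` where `A` is the active set.  Then for any index set `F` with
`Fᶜ ∩ A ≠ ∅`,
`max_{j ∈ Fᶜ∩A} (trace(M^SIR_{F∪{j}}) - trace(M^SIR_F)) ≥ λ_q λ_max(Σ)⁻¹ λ_min(Σ)² β_min²`. -/
theorem sir_max_trace_change {Ω : Type*} [m0 : MeasurableSpace Ω]
    (μ : Measure Ω) [IsProbabilityMeasure μ]
    {p H q : ℕ} (hq : 0 < q) (X : Ω → Fin p → ℝ) (Y : Ω → ℝ)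
    (hX : Measurable X) (hY : Measurable Y)
    (hmom : ∀ i, MemLp (fun ω => X ω i) 4 μ)
    (hmean : ∀ i, ∫ ω, X ω i ∂μ = 0)
    (hpos : (covM μ X Finset.univ).PosDef)
    (J : Fin H → Set ℝ) (hJ : IsSlicePartition J)
    (hph : ∀ h, 0 < sliceP μ Y J h)
    (invS : ∀ F : Finset (Fin p), Matrix F F ℝ)
    (hinvS : ∀ F, IsInvSqrt (invS F) (covM μ X F))
    (hLCM : SubsetLCM μ X)
    -- spectral decomposition of `M^SIR` with positive, decreasing eigenvalues:
    (lam : Fin q → ℝ) (hlam_pos : ∀ i, 0 < lam i) (hlam_mono : Antitone lam)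
    (η : Fin q → (↥(Finset.univ : Finset (Fin p)) → ℝ))
    (hη : ∀ i k : Fin q, η i ⬝ᵥ η k = if i = k then (1 : ℝ) else 0)
    (hspec : MSIR μ X Y J Finset.univ (invS Finset.univ)
      = ∑ i, lam i • vecMulVec (η i) (η i))
    -- extreme eigenvalues of `Σ`:
    (lamMax lamMin : ℝ)
    (hmax : (∀ v : (↥(Finset.univ : Finset (Fin p)) → ℝ),
        v ⬝ᵥ (covM μ X Finset.univ).mulVec v ≤ lamMax * (v ⬝ᵥ v)) ∧
      ∃ v : (↥(Finset.univ : Finset (Fin p)) → ℝ), v ≠ 0 ∧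
        v ⬝ᵥ (covM μ X Finset.univ).mulVec v = lamMax * (v ⬝ᵥ v))
    (hmin : (∀ v : (↥(Finset.univ : Finset (Fin p)) → ℝ),
        lamMin * (v ⬝ᵥ v) ≤ v ⬝ᵥ (covM μ X Finset.univ).mulVec v) ∧
      ∃ v : (↥(Finset.univ : Finset (Fin p)) → ℝ), v ≠ 0 ∧
        v ⬝ᵥ (covM μ X Finset.univ).mulVec v = lamMin * (v ⬝ᵥ v))
    -- `β_i = Σ^{-1/2} η_i` vanishes outside the active set `A`:
    (A : Finset (Fin p)) (hAne : A.Nonempty)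
    (hβA : ∀ (i : Fin q) (j : Fin p), j ∉ A →
      (invS Finset.univ).mulVec (η i) ⟨j, Finset.mem_univ j⟩ = 0)
    (F : Finset (Fin p)) (hFA : ((Fᶜ : Finset (Fin p)) ∩ A).Nonempty) :
    lam ⟨q - 1, Nat.sub_lt hq one_pos⟩ * lamMax⁻¹ * lamMin ^ 2 *
        (A.inf' hAne fun j => Real.sqrt (∑ i,
          ((invS Finset.univ).mulVec (η i) ⟨j, Finset.mem_univ j⟩) ^ 2)) ^ 2
      ≤ (Fᶜ ∩ A).sup' hFA fun j =>
          (MSIR μ X Y J (insert j F) (invS (insert j F))).trace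
            - (MSIR μ X Y J F (invS F)).trace := by
  classical
  obtain ⟨hS0symm, hS0mul⟩ := hinvS Finset.univ
  have hPD : ∀ G : Finset (Fin p), (covM μ X G).PosDef := tp_covM_posdef μ X hpos
  have hdet : ∀ G : Finset (Fin p), IsUnit (covM μ X G).det := fun G =>
    isUnit_iff_ne_zero.mpr (ne_of_gt (hPD G).det_pos)
  have hposQ : ∀ v : ↥(Finset.univ : Finset (Fin p)) → ℝ, v ≠ 0 →
      0 < v ⬝ᵥ (covM μ X Finset.univ).mulVec v := fun v hv => (Matrix.posDef_iff_dotProduct_mulVec.mp hpos).2 hv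
  have hlamMax_pos : 0 < lamMax := by
    obtain ⟨v, hv, hveq⟩ := hmax.2
    have h1 := hposQ v hv
    rw [hveq] at h1
    have h2 := tp_dot_self_pos hv
    nlinarith
  have hlamMin_pos : 0 < lamMin := by
    obtain ⟨v, hv, hveq⟩ := hmin.2
    have h1 := hposQ v hv
    rw [hveq] at h1
    have h2 := tp_dot_self_pos hv
    nlinarith
  have hs_pos : ∀ j : Fin p, j ∉ F → 0 < tpS μ X F j := by
    intro j hj
    rw [tp_s_quad μ X hj (hdet F)]
    have h1 := hmin.1 (tpB μ X F j)
    have h2 := tp_b_self μ X F j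
    nlinarith
  have hs_le : ∀ j : Fin p, j ∉ F → tpS μ X F j ≤ lamMax := by
    intro j hj
    have hcθ : 0 ≤ (fun i : ↥F => ∫ ω, X ω j * X ω i.1 ∂μ) ⬝ᵥ thetaJF μ X F j := by
      have h1 : (covM μ X F).mulVec (thetaJF μ X F j)
          = fun i : ↥F => ∫ ω, X ω j * X ω i.1 ∂μ := by
        rw [show thetaJF μ X F j
            = (covM μ X F)⁻¹.mulVec (fun i : ↥F => ∫ ω, X ω j * X ω i.1 ∂μ) from rfl,
          Matrix.mulVec_mulVec, Matrix.mul_nonsing_inv _ (hdet F), Matrix.one_mulVec]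
      rw [← h1, dotProduct_comm]
      exact (Matrix.posSemidef_iff_dotProduct_mulVec.mp (hPD F).posSemidef).2 (thetaJF μ X F j)
    have hgj : (∫ ω, X ω j * X ω j ∂μ) ≤ lamMax := by
      have h1 := hmax.1 (fun t : ↥(Finset.univ : Finset (Fin p)) => if t.1 = j then (1:ℝ) else 0)
      have h2 : ((fun t : ↥(Finset.univ : Finset (Fin p)) => if t.1 = j then (1:ℝ) else 0) ⬝ᵥ
          (fun t : ↥(Finset.univ : Finset (Fin p)) => if t.1 = j then (1:ℝ) else 0)) = 1 := by
        have e1 : ((fun t : ↥(Finset.univ : Finset (Fin p)) => if t.1 = j then (1:ℝ) else 0) ⬝ᵥ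
            (fun t : ↥(Finset.univ : Finset (Fin p)) => if t.1 = j then (1:ℝ) else 0))
            = ∑ l : Fin p, (if l = j then (1:ℝ) else 0) * (if l = j then (1:ℝ) else 0) :=
          tp_sum_univ (fun l => (if l = j then (1:ℝ) else 0) * (if l = j then (1:ℝ) else 0))
        rw [e1]
        have e2 : (∑ l : Fin p, (if l = j then (1:ℝ) else 0) * (if l = j then (1:ℝ) else 0))
            = ∑ l : Fin p, (if l = j then (1:ℝ) else 0) :=
          Finset.sum_congr rfl fun l _ => by by_cases hh : l = j <;> simp [hh]
        rw [e2]
        simp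
      have h3 : ((fun t : ↥(Finset.univ : Finset (Fin p)) => if t.1 = j then (1:ℝ) else 0) ⬝ᵥ
          (covM μ X Finset.univ).mulVec
            (fun t : ↥(Finset.univ : Finset (Fin p)) => if t.1 = j then (1:ℝ) else 0))
          = ∫ ω, X ω j * X ω j ∂μ := by
        have hMw : (covM μ X Finset.univ).mulVec
            (fun t : ↥(Finset.univ : Finset (Fin p)) => if t.1 = j then (1:ℝ) else 0)
            = fun t => ∫ ω, X ω t.1 * X ω j ∂μ := by
          funext t
          have e1 : (covM μ X Finset.univ).mulVec
              (fun t' : ↥(Finset.univ : Finset (Fin p)) => if t'.1 = j then (1:ℝ) else 0) t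
              = ∑ l : Fin p, (∫ ω, X ω t.1 * X ω l ∂μ) * (if l = j then (1:ℝ) else 0) :=
            tp_sum_univ (fun l => (∫ ω, X ω t.1 * X ω l ∂μ) * (if l = j then (1:ℝ) else 0))
          rw [e1]
          have e2 : (∑ l : Fin p, (∫ ω, X ω t.1 * X ω l ∂μ) * (if l = j then (1:ℝ) else 0))
              = ∑ l : Fin p, (if l = j then (∫ ω, X ω t.1 * X ω l ∂μ) else 0) :=
            Finset.sum_congr rfl fun l _ => by by_cases hh : l = j <;> simp [hh]
          rw [e2]
          simp
        rw [hMw]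
        have e3 : ((fun t : ↥(Finset.univ : Finset (Fin p)) => if t.1 = j then (1:ℝ) else 0) ⬝ᵥ
            (fun t : ↥(Finset.univ : Finset (Fin p)) => ∫ ω, X ω t.1 * X ω j ∂μ))
            = ∑ l : Fin p, (if l = j then (1:ℝ) else 0) * ∫ ω, X ω l * X ω j ∂μ :=
          tp_sum_univ (fun l => (if l = j then (1:ℝ) else 0) * ∫ ω, X ω l * X ω j ∂μ)
        rw [e3]
        have e4 : (∑ l : Fin p, (if l = j then (1:ℝ) else 0) * ∫ ω, X ω l * X ω j ∂μ)
            = ∑ l : Fin p, (if l = j then (∫ ω, X ω l * X ω j ∂μ) else 0) :=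
          Finset.sum_congr rfl fun l _ => by by_cases hh : l = j <;> simp [hh]
        rw [e4]
        simp
      rw [h2, h3, mul_one] at h1
      exact h1
    have hts : tpS μ X F j = (∫ ω, X ω j * X ω j ∂μ)
        - (fun i : ↥F => ∫ ω, X ω j * X ω i.1 ∂μ) ⬝ᵥ thetaJF μ X F j := rfl
    rw [hts]
    linarith
  -- symmetry of `S₀`
  have hS0s : ∀ a b : ↥(Finset.univ : Finset (Fin p)),
      invS Finset.univ a b = invS Finset.univ b a := by
    intro a b
    calc invS Finset.univ a b = (invS Finset.univ)ᵀ b a := rfl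
      _ = invS Finset.univ b a := by rw [hS0symm]
  -- the per-index lower bound
  have main : ∀ j ∈ Fᶜ ∩ A,
      lam ⟨q - 1, Nat.sub_lt hq one_pos⟩ * lamMax⁻¹ *
          (∑ i, ((invS Finset.univ).mulVec (η i) ⬝ᵥ
            (covM μ X Finset.univ).mulVec (tpB μ X F j)) ^ 2)
        ≤ (MSIR μ X Y J (insert j F) (invS (insert j F))).trace
            - (MSIR μ X Y J F (invS F)).trace := by
    intro j hjmem
    have hjF : j ∉ F := Finset.mem_compl.mp (Finset.mem_inter.mp hjmem).1
    have hsne : tpS μ X F j ≠ 0 := ne_of_gt (hs_pos j hjF)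
    have htd : (MSIR μ X Y J (insert j F) (invS (insert j F))).trace
        - (MSIR μ X Y J F (invS F)).trace
        = (tpS μ X F j)⁻¹ * ∑ h, sliceP μ Y J h *
            (tpB μ X F j ⬝ᵥ sliceU μ X Y J Finset.univ h) ^ 2 :=
      tp_trace_diff μ X Y J hjF (hdet F) hsne (invS F) (hinvS F).2
        (invS (insert j F)) (hinvS (insert j F)).2
    have hy : (invS Finset.univ).mulVec ((invS Finset.univ).mulVec
        ((covM μ X Finset.univ).mulVec (tpB μ X F j))) = tpB μ X F j := by
      rw [Matrix.mulVec_mulVec, hS0mul, Matrix.mulVec_mulVec,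
        Matrix.nonsing_inv_mul _ (hdet Finset.univ), Matrix.one_mulVec]
    have hspec2 : (∑ h, sliceP μ Y J h *
          (tpB μ X F j ⬝ᵥ sliceU μ X Y J Finset.univ h) ^ 2)
        = ∑ i, lam i * ((invS Finset.univ).mulVec (η i) ⬝ᵥ
            (covM μ X Finset.univ).mulVec (tpB μ X F j)) ^ 2 := by
      have e1 : (∑ h, sliceP μ Y J h *
            (tpB μ X F j ⬝ᵥ sliceU μ X Y J Finset.univ h) ^ 2)
          = tpB μ X F j ⬝ᵥ (∑ h, sliceP μ Y J h •
              Matrix.vecMulVec (sliceU μ X Y J Finset.univ h)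
                (sliceU μ X Y J Finset.univ h)).mulVec (tpB μ X F j) := by
        rw [tp_quad_spec]
        exact Finset.sum_congr rfl fun h _ => by rw [dotProduct_comm]
      have c1 : tpB μ X F j ⬝ᵥ (∑ h, sliceP μ Y J h •
            Matrix.vecMulVec (sliceU μ X Y J Finset.univ h)
              (sliceU μ X Y J Finset.univ h)).mulVec (tpB μ X F j)
          = ((invS Finset.univ).mulVec ((invS Finset.univ).mulVec
              ((covM μ X Finset.univ).mulVec (tpB μ X F j)))) ⬝ᵥ
            (∑ h, sliceP μ Y J h • Matrix.vecMulVec (sliceU μ X Y J Finset.univ h)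
              (sliceU μ X Y J Finset.univ h)).mulVec
              ((invS Finset.univ).mulVec ((invS Finset.univ).mulVec
                ((covM μ X Finset.univ).mulVec (tpB μ X F j)))) := by
        rw [hy]
      have c2 : ((invS Finset.univ).mulVec ((invS Finset.univ).mulVec
            ((covM μ X Finset.univ).mulVec (tpB μ X F j)))) ⬝ᵥ
            (∑ h, sliceP μ Y J h • Matrix.vecMulVec (sliceU μ X Y J Finset.univ h)
              (sliceU μ X Y J Finset.univ h)).mulVec
              ((invS Finset.univ).mulVec ((invS Finset.univ).mulVec
                ((covM μ X Finset.univ).mulVec (tpB μ X F j))))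
          = ((invS Finset.univ).mulVec ((covM μ X Finset.univ).mulVec (tpB μ X F j))) ⬝ᵥ
            (invS Finset.univ * (∑ h, sliceP μ Y J h •
              Matrix.vecMulVec (sliceU μ X Y J Finset.univ h)
                (sliceU μ X Y J Finset.univ h)) * invS Finset.univ).mulVec
              ((invS Finset.univ).mulVec ((covM μ X Finset.univ).mulVec (tpB μ X F j))) := by
        rw [tp_symm_shift hS0s]
        congr 1
        simp only [Matrix.mulVec_mulVec, Matrix.mul_assoc]
      have c3 : invS Finset.univ * (∑ h, sliceP μ Y J h •
          Matrix.vecMulVec (sliceU μ X Y J Finset.univ h) (sliceU μ X Y J Finset.univ h)) *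
          invS Finset.univ = ∑ i, lam i • Matrix.vecMulVec (η i) (η i) := hspec
      rw [e1, c1, c2, c3, tp_quad_spec]
      refine Finset.sum_congr rfl fun i _ => ?_
      rw [(tp_symm_shift hS0s (η i) ((covM μ X Finset.univ).mulVec (tpB μ X F j))).symm]
    have hlamq : ∀ i : Fin q, lam ⟨q - 1, Nat.sub_lt hq one_pos⟩ ≤ lam i := fun i =>
      hlam_mono (by rw [Fin.le_def]; exact Nat.le_pred_of_lt i.2)
    have hPPnn : 0 ≤ ∑ i, ((invS Finset.univ).mulVec (η i) ⬝ᵥ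
        (covM μ X Finset.univ).mulVec (tpB μ X F j)) ^ 2 :=
      Finset.sum_nonneg fun i _ => sq_nonneg _
    have hsum_ge : lam ⟨q - 1, Nat.sub_lt hq one_pos⟩ *
        (∑ i, ((invS Finset.univ).mulVec (η i) ⬝ᵥ
          (covM μ X Finset.univ).mulVec (tpB μ X F j)) ^ 2)
        ≤ ∑ i, lam i * ((invS Finset.univ).mulVec (η i) ⬝ᵥ
            (covM μ X Finset.univ).mulVec (tpB μ X F j)) ^ 2 := by
      rw [Finset.mul_sum]
      exact Finset.sum_le_sum fun i _ => mul_le_mul_of_nonneg_right (hlamq i) (sq_nonneg _)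
    calc lam ⟨q - 1, Nat.sub_lt hq one_pos⟩ * lamMax⁻¹ *
          (∑ i, ((invS Finset.univ).mulVec (η i) ⬝ᵥ
            (covM μ X Finset.univ).mulVec (tpB μ X F j)) ^ 2)
        = lamMax⁻¹ * (lam ⟨q - 1, Nat.sub_lt hq one_pos⟩ *
            (∑ i, ((invS Finset.univ).mulVec (η i) ⬝ᵥ
              (covM μ X Finset.univ).mulVec (tpB μ X F j)) ^ 2)) := by ring
      _ ≤ (tpS μ X F j)⁻¹ * (lam ⟨q - 1, Nat.sub_lt hq one_pos⟩ *
            (∑ i, ((invS Finset.univ).mulVec (η i) ⬝ᵥ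
              (covM μ X Finset.univ).mulVec (tpB μ X F j)) ^ 2)) :=
          mul_le_mul_of_nonneg_right (inv_anti₀ (hs_pos j hjF) (hs_le j hjF))
            (mul_nonneg (hlam_pos _).le hPPnn)
      _ ≤ (tpS μ X F j)⁻¹ * (∑ i, lam i * ((invS Finset.univ).mulVec (η i) ⬝ᵥ
            (covM μ X Finset.univ).mulVec (tpB μ X F j)) ^ 2) :=
          mul_le_mul_of_nonneg_left hsum_ge (inv_nonneg.mpr (hs_pos j hjF).le)
      _ = (MSIR μ X Y J (insert j F) (invS (insert j F))).trace
            - (MSIR μ X Y J F (invS F)).trace := by rw [htd, hspec2]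
  -- aggregation over `Fᶜ ∩ A`
  have hGF : ∀ k ∈ Fᶜ ∩ A, k ∉ F := fun k hk =>
    Finset.mem_compl.mp (Finset.mem_inter.mp hk).1
  have hGA : ∀ k ∈ Fᶜ ∩ A, k ∈ A := fun k hk => (Finset.mem_inter.mp hk).2
  have hsupp : ∀ (i : Fin q) (j : Fin p), j ∈ Fᶜ ∩ A →
      ((invS Finset.univ).mulVec (η i) ⬝ᵥ (covM μ X Finset.univ).mulVec (tpB μ X F j))
        = ∑ k ∈ Fᶜ ∩ A, (invS Finset.univ).mulVec (η i) ⟨k, Finset.mem_univ k⟩ *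
            tpD μ X F j k := by
    intro i j hj
    have e1 : ((invS Finset.univ).mulVec (η i) ⬝ᵥ
        (covM μ X Finset.univ).mulVec (tpB μ X F j))
        = ∑ k : Fin p, (invS Finset.univ).mulVec (η i) ⟨k, Finset.mem_univ k⟩ *
            tpD μ X F j k :=
      tp_sum_univ (fun k => (invS Finset.univ).mulVec (η i) ⟨k, Finset.mem_univ k⟩ *
        tpD μ X F j k)
    rw [e1]
    refine (Finset.sum_subset (Finset.subset_univ _) fun k _ hk => ?_).symm
    by_cases hkA : k ∈ A
    · have hkF : k ∈ F := by
        by_contra hkF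
        exact hk (Finset.mem_inter.mpr ⟨Finset.mem_compl.mpr hkF, hkA⟩)
      rw [tp_d_zero μ X (hGF j hj) (hdet F) hkF, mul_zero]
    · rw [hβA i k hkA, zero_mul]
  have hBnn : 0 ≤ A.inf' hAne (fun j => Real.sqrt (∑ i,
      ((invS Finset.univ).mulVec (η i) ⟨j, Finset.mem_univ j⟩) ^ 2)) :=
    Finset.le_inf' hAne _ fun b _ => Real.sqrt_nonneg _
  have hsum2 : (∑ jj ∈ Fᶜ ∩ A, lamMin ^ 2 * (A.inf' hAne (fun j => Real.sqrt (∑ i,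
        ((invS Finset.univ).mulVec (η i) ⟨j, Finset.mem_univ j⟩) ^ 2))) ^ 2)
      ≤ ∑ jj ∈ Fᶜ ∩ A, ∑ i, ((invS Finset.univ).mulVec (η i) ⬝ᵥ
          (covM μ X Finset.univ).mulVec (tpB μ X F jj)) ^ 2 := by
    have e1 : (∑ jj ∈ Fᶜ ∩ A, ∑ i, ((invS Finset.univ).mulVec (η i) ⬝ᵥ
          (covM μ X Finset.univ).mulVec (tpB μ X F jj)) ^ 2)
        = ∑ i, ∑ jj ∈ Fᶜ ∩ A, (∑ k ∈ Fᶜ ∩ A,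
            (invS Finset.univ).mulVec (η i) ⟨k, Finset.mem_univ k⟩ * tpD μ X F jj k) ^ 2 := by
      rw [Finset.sum_comm]
      exact Finset.sum_congr rfl fun i _ => Finset.sum_congr rfl fun jj hjj => by
        rw [hsupp i jj hjj]
    rw [e1]
    have e2 : ∀ i : Fin q, lamMin ^ 2 * (∑ k ∈ Fᶜ ∩ A,
        ((invS Finset.univ).mulVec (η i) ⟨k, Finset.mem_univ k⟩) ^ 2)
        ≤ ∑ jj ∈ Fᶜ ∩ A, (∑ k ∈ Fᶜ ∩ A,
            (invS Finset.univ).mulVec (η i) ⟨k, Finset.mem_univ k⟩ * tpD μ X F jj k) ^ 2 :=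
      fun i => tp_claim μ X F (Fᶜ ∩ A) hGF (hdet F) hlamMin_pos hmin.1
        (fun k => (invS Finset.univ).mulVec (η i) ⟨k, Finset.mem_univ k⟩)
    have e3 : (∑ jj ∈ Fᶜ ∩ A, lamMin ^ 2 * (A.inf' hAne (fun j => Real.sqrt (∑ i,
          ((invS Finset.univ).mulVec (η i) ⟨j, Finset.mem_univ j⟩) ^ 2))) ^ 2)
        ≤ ∑ i, lamMin ^ 2 * (∑ k ∈ Fᶜ ∩ A,
            ((invS Finset.univ).mulVec (η i) ⟨k, Finset.mem_univ k⟩) ^ 2) := by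
      have e4 : (∑ i : Fin q, lamMin ^ 2 * (∑ k ∈ Fᶜ ∩ A,
          ((invS Finset.univ).mulVec (η i) ⟨k, Finset.mem_univ k⟩) ^ 2))
          = lamMin ^ 2 * ∑ k ∈ Fᶜ ∩ A, ∑ i : Fin q,
              ((invS Finset.univ).mulVec (η i) ⟨k, Finset.mem_univ k⟩) ^ 2 := by
        calc (∑ i : Fin q, lamMin ^ 2 * (∑ k ∈ Fᶜ ∩ A,
            ((invS Finset.univ).mulVec (η i) ⟨k, Finset.mem_univ k⟩) ^ 2))
            = ∑ i : Fin q, ∑ k ∈ Fᶜ ∩ A, lamMin ^ 2 *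
                ((invS Finset.univ).mulVec (η i) ⟨k, Finset.mem_univ k⟩) ^ 2 :=
              Finset.sum_congr rfl fun i _ => Finset.mul_sum _ _ _
          _ = ∑ k ∈ Fᶜ ∩ A, ∑ i : Fin q, lamMin ^ 2 *
                ((invS Finset.univ).mulVec (η i) ⟨k, Finset.mem_univ k⟩) ^ 2 :=
              Finset.sum_comm
          _ = ∑ k ∈ Fᶜ ∩ A, lamMin ^ 2 * ∑ i : Fin q,
                ((invS Finset.univ).mulVec (η i) ⟨k, Finset.mem_univ k⟩) ^ 2 :=
              Finset.sum_congr rfl fun k _ => (Finset.mul_sum _ _ _).symm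
          _ = lamMin ^ 2 * ∑ k ∈ Fᶜ ∩ A, ∑ i : Fin q,
                ((invS Finset.univ).mulVec (η i) ⟨k, Finset.mem_univ k⟩) ^ 2 :=
              (Finset.mul_sum _ _ _).symm
      rw [e4]
      have e5 : ∀ k ∈ Fᶜ ∩ A, (A.inf' hAne (fun j => Real.sqrt (∑ i,
          ((invS Finset.univ).mulVec (η i) ⟨j, Finset.mem_univ j⟩) ^ 2))) ^ 2
          ≤ ∑ i : Fin q, ((invS Finset.univ).mulVec (η i) ⟨k, Finset.mem_univ k⟩) ^ 2 := by
        intro k hk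
        have h7 : A.inf' hAne (fun j => Real.sqrt (∑ i,
            ((invS Finset.univ).mulVec (η i) ⟨j, Finset.mem_univ j⟩) ^ 2))
            ≤ Real.sqrt (∑ i, ((invS Finset.univ).mulVec (η i) ⟨k, Finset.mem_univ k⟩) ^ 2) :=
          Finset.inf'_le _ (hGA k hk)
        have h8 : (Real.sqrt (∑ i, ((invS Finset.univ).mulVec (η i)
            ⟨k, Finset.mem_univ k⟩) ^ 2)) ^ 2
            = ∑ i, ((invS Finset.univ).mulVec (η i) ⟨k, Finset.mem_univ k⟩) ^ 2 :=
          Real.sq_sqrt (Finset.sum_nonneg fun i _ => sq_nonneg _)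
        calc (A.inf' hAne (fun j => Real.sqrt (∑ i,
              ((invS Finset.univ).mulVec (η i) ⟨j, Finset.mem_univ j⟩) ^ 2))) ^ 2
            ≤ (Real.sqrt (∑ i, ((invS Finset.univ).mulVec (η i)
                ⟨k, Finset.mem_univ k⟩) ^ 2)) ^ 2 := pow_le_pow_left₀ hBnn h7 2
          _ = _ := h8
      calc (∑ jj ∈ Fᶜ ∩ A, lamMin ^ 2 * (A.inf' hAne (fun j => Real.sqrt (∑ i,
            ((invS Finset.univ).mulVec (η i) ⟨j, Finset.mem_univ j⟩) ^ 2))) ^ 2)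
          = lamMin ^ 2 * ∑ jj ∈ Fᶜ ∩ A, (A.inf' hAne (fun j => Real.sqrt (∑ i,
              ((invS Finset.univ).mulVec (η i) ⟨j, Finset.mem_univ j⟩) ^ 2))) ^ 2 := by
            rw [Finset.mul_sum]
        _ ≤ lamMin ^ 2 * ∑ k ∈ Fᶜ ∩ A, ∑ i : Fin q,
              ((invS Finset.univ).mulVec (η i) ⟨k, Finset.mem_univ k⟩) ^ 2 := by
            refine mul_le_mul_of_nonneg_left ?_ (sq_nonneg lamMin)
            exact Finset.sum_le_sum e5
    exact le_trans e3 (Finset.sum_le_sum fun i _ => e2 i)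
  obtain ⟨jj, hjjG, hjj⟩ := Finset.exists_le_of_sum_le hFA hsum2
  calc lam ⟨q - 1, Nat.sub_lt hq one_pos⟩ * lamMax⁻¹ * lamMin ^ 2 *
        (A.inf' hAne fun j => Real.sqrt (∑ i,
          ((invS Finset.univ).mulVec (η i) ⟨j, Finset.mem_univ j⟩) ^ 2)) ^ 2
      = lam ⟨q - 1, Nat.sub_lt hq one_pos⟩ * lamMax⁻¹ *
          (lamMin ^ 2 * (A.inf' hAne fun j => Real.sqrt (∑ i,
            ((invS Finset.univ).mulVec (η i) ⟨j, Finset.mem_univ j⟩) ^ 2)) ^ 2) := by ring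
    _ ≤ lam ⟨q - 1, Nat.sub_lt hq one_pos⟩ * lamMax⁻¹ *
          (∑ i, ((invS Finset.univ).mulVec (η i) ⬝ᵥ
            (covM μ X Finset.univ).mulVec (tpB μ X F jj)) ^ 2) :=
        mul_le_mul_of_nonneg_left hjj
          (mul_nonneg (hlam_pos _).le (inv_nonneg.mpr hlamMax_pos.le))
    _ ≤ (MSIR μ X Y J (insert jj F) (invS (insert jj F))).trace
          - (MSIR μ X Y J F (invS F)).trace := main jj hjjG
    _ ≤ (Fᶜ ∩ A).sup' hFA fun j =>
          (MSIR μ X Y J (insert j F) (invS (insert j F))).trace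
            - (MSIR μ X Y J F (invS F)).trace :=
        Finset.le_sup' (fun j => (MSIR μ X Y J (insert j F) (invS (insert j F))).trace
          - (MSIR μ X Y J F (invS F)).trace) hjjG
end
end

section
/- For h = 1,…,H let W_h = p_h^{-1/2}(1(Y∈J_h) − p_h) and a_h = Σ^{-1}E(X W_h). Then trace(M^SIR) = (H − 1) − Σ_{h=1}^H E{(W_h − Xᵀ a_h)²}. -/
open MeasureTheory ProbabilityTheory Matrix Filter Finset
open scoped BigOperators ENNReal

noncomputable section

open TracePursuit

/-- **Lemma 4.** For `h = 1,…,H` let `W_h = p_h^{-1/2}(1(Y∈J_h) − p_h)` and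
`a_h = Σ⁻¹ E(X W_h)`.  Then `trace(M^SIR) = (H − 1) − Σ_h E((W_h − Xᵀ a_h)²)`. -/
theorem sir_trace_regression_identity {Ω : Type*} [m0 : MeasurableSpace Ω]
    (μ : Measure Ω) [IsProbabilityMeasure μ]
    {p H : ℕ} (X : Ω → Fin p → ℝ) (Y : Ω → ℝ)
    (hX : Measurable X) (hY : Measurable Y)
    (hmom : ∀ i, MemLp (fun ω => X ω i) 4 μ)
    (hmean : ∀ i, ∫ ω, X ω i ∂μ = 0)
    (hpos : (covM μ X Finset.univ).PosDef)
    (J : Fin H → Set ℝ) (hJ : IsSlicePartition J)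
    (hph : ∀ h, 0 < sliceP μ Y J h)
    (invS : ∀ F : Finset (Fin p), Matrix F F ℝ)
    (hinvS : ∀ F, IsInvSqrt (invS F) (covM μ X F))
    -- `W_h = p_h^{-1/2} (1(Y ∈ J_h) - p_h)`:
    (W : Fin H → Ω → ℝ)
    (hW : ∀ h ω, W h ω
      = ((Y ⁻¹' J h).indicator (fun _ => (1 : ℝ)) ω - sliceP μ Y J h)
          / Real.sqrt (sliceP μ Y J h))
    -- `a_h = Σ⁻¹ E(X W_h)`:
    (a : Fin H → (↥(Finset.univ : Finset (Fin p)) → ℝ))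
    (ha : ∀ h, a h
      = (covM μ X Finset.univ)⁻¹.mulVec fun i => ∫ ω, X ω i.1 * W h ω ∂μ) :
    (MSIR μ X Y J Finset.univ (invS Finset.univ)).trace
      = (H - 1 : ℝ)
        - ∑ h, ∫ ω, (W h ω - ∑ i : ↥(Finset.univ : Finset (Fin p)), X ω i.1 * a h i) ^ 2 ∂μ := by
  classical
  obtain ⟨hJm, hJd, hJu⟩ := hJ
  set c : Fin H → ℝ := fun h => sliceP μ Y J h with hcdef
  set A : Fin H → Set Ω := fun h => Y ⁻¹' J h with hAdef
  have mA : ∀ h, MeasurableSet (A h) := fun h => hY (hJm h)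
  set U : Fin H → (↥(Finset.univ : Finset (Fin p)) → ℝ) := fun h => sliceU μ X Y J Finset.univ h with hUdef0
  set Sg : Matrix (Finset.univ : Finset (Fin p)) (Finset.univ : Finset (Fin p)) ℝ := covM μ X Finset.univ with hSgdef
  have hc_pos : ∀ h, 0 < c h := hph
  have hdet : IsUnit Sg.det := isUnit_iff_ne_zero.mpr hpos.det_pos.ne'
  -- basic integrability
  have hL2 : ∀ i : Fin p, MemLp (fun ω => X ω i) 2 μ :=
    fun i => (hmom i).mono_exponent (by norm_num)
  have hXint : ∀ i : Fin p, Integrable (fun ω => X ω i) μ := fun i =>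
    memLp_one_iff_integrable.mp ((hmom i).mono_exponent (by norm_num))
  have hXXint : ∀ i j : Fin p, Integrable (fun ω => X ω i * X ω j) μ := by
    intro i j
    have := (hL2 i).smul (𝕜 := ℝ) (hL2 j) (p := 2) (q := 2) (r := 1)
      (hpqr := ⟨by simp [ENNReal.inv_two_add_inv_two]⟩)
    rw [memLp_one_iff_integrable] at this
    simpa [smul_eq_mul, mul_comm, Pi.mul_def] using this
  -- sum of slice probabilities is 1
  have hcsum : ∑ h, c h = 1 := by
    have hdisj : Pairwise (Function.onFun Disjoint A) := fun i j hij => (hJd hij).preimage Y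
    have hUu : (⋃ h, A h) = Set.univ := by
      rw [hAdef, ← Set.preimage_iUnion, hJu, Set.preimage_univ]
    have h1 : ∑ h, μ (A h) = 1 := by
      calc ∑ h, μ (A h) = ∑' h, μ (A h) := (tsum_fintype _).symm
        _ = μ (⋃ h, A h) := (measure_iUnion hdisj fun h => mA h).symm
        _ = 1 := by rw [hUu, measure_univ]
    calc ∑ h, c h = (∑ h, μ (A h)).toReal := by
          rw [ENNReal.toReal_sum (fun h _ => measure_ne_top μ _)]
          rfl
      _ = 1 := by rw [h1]; simp
  -- slice means
  have hUval : ∀ h (i : ↥(Finset.univ : Finset (Fin p))), ∫ ω in A h, X ω i.1 ∂μ = c h * U h i := by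
    intro h i
    have hUi : U h i = (∫ ω in A h, X ω i.1 ∂μ) / c h := rfl
    rw [hUi, mul_comm, div_mul_cancel₀ _ (hc_pos h).ne']
  -- the indicator
  set ind : Fin H → Ω → ℝ := fun h => (A h).indicator (fun _ => (1:ℝ)) with hinddef
  have hind_int : ∀ h, Integrable (ind h) μ := fun h => (integrable_const (1:ℝ)).indicator (mA h)
  have hind_val : ∀ h, ∫ ω, ind h ω ∂μ = c h := by
    intro h
    rw [hinddef]
    rw [integral_indicator_const _ (mA h)]
    simp [hcdef, sliceP, hAdef, measureReal_def]
  -- X * W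
  have hXW_eq : ∀ h (i : Fin p), (fun ω => X ω i * W h ω)
      = fun ω => ((A h).indicator (fun ω => X ω i) ω - c h * X ω i) / Real.sqrt (c h) := by
    intro h i; funext ω; rw [hW h ω]
    simp only [Set.indicator_apply]
    by_cases hω : Y ω ∈ J h <;> simp [hω, hcdef, hAdef] <;> ring
  have hXWint : ∀ h (i : Fin p), Integrable (fun ω => X ω i * W h ω) μ := by
    intro h i; rw [hXW_eq]
    exact (((hXint i).indicator (mA h)).sub ((hXint i).const_mul (c h))).div_const _
  have hXWval : ∀ h (i : ↥(Finset.univ : Finset (Fin p))), ∫ ω, X ω i.1 * W h ω ∂μ = Real.sqrt (c h) * U h i := by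
    intro h i
    rw [hXW_eq h i.1, integral_div,
      integral_sub ((hXint i.1).indicator (mA h)) ((hXint i.1).const_mul (c h)),
      integral_indicator (mA h), integral_const_mul, hmean, mul_zero, sub_zero, hUval h i,
      mul_comm (c h), mul_div_assoc, Real.div_sqrt]
    exact mul_comm _ _
  -- W^2
  have hW2_eq : ∀ h, (fun ω => W h ω ^ 2)
      = fun ω => ((1 - 2 * c h) * ind h ω + c h ^ 2) / c h := by
    intro h; funext ω
    rw [hW h ω, div_pow, Real.sq_sqrt (hc_pos h).le]
    congr 1
    rw [hinddef]
    simp only [Set.indicator_apply]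
    by_cases hω : Y ω ∈ J h <;> simp [hω, hcdef, hAdef] <;> ring
  have hW2int : ∀ h, Integrable (fun ω => W h ω ^ 2) μ := by
    intro h; rw [hW2_eq]
    exact (((hind_int h).const_mul _).add (integrable_const _)).div_const _
  have hW2val : ∀ h, ∫ ω, W h ω ^ 2 ∂μ = 1 - c h := by
    intro h
    rw [hW2_eq, integral_div,
      integral_add ((hind_int h).const_mul _) (integrable_const _),
      integral_const_mul, hind_val, integral_const]
    simp only [probReal_univ, one_smul]
    have hc := (hc_pos h).ne'
    field_simp
    ring
  -- covariance entries
  have hSg : ∀ i j : ↥(Finset.univ : Finset (Fin p)), Sg i j = ∫ ω, X ω i.1 * X ω j.1 ∂μ := fun i j => rfl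
  -- the main per-slice computation
  have hterm : ∀ h, ∫ ω, (W h ω - ∑ i : ↥(Finset.univ : Finset (Fin p)), X ω i.1 * a h i) ^ 2 ∂μ
      = (1 - c h) - c h * (U h ⬝ᵥ Sg⁻¹.mulVec (U h)) := by
    intro h
    set b : ↥(Finset.univ : Finset (Fin p)) → ℝ := fun i => Real.sqrt (c h) * U h i with hb
    have haB : a h = Sg⁻¹.mulVec b := by
      rw [ha h]
      have hfb : (fun i : ↥(Finset.univ : Finset (Fin p)) => ∫ ω, X ω i.1 * W h ω ∂μ) = b :=
        funext fun i => hXWval h i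
      rw [hfb]
    have hpt : (fun ω => (W h ω - ∑ i : ↥(Finset.univ : Finset (Fin p)), X ω i.1 * a h i) ^ 2)
        = fun ω => (W h ω ^ 2 - 2 * ∑ i : ↥(Finset.univ : Finset (Fin p)), a h i * (X ω i.1 * W h ω))
            + ∑ i : ↥(Finset.univ : Finset (Fin p)), ∑ j : ↥(Finset.univ : Finset (Fin p)), a h i * a h j * (X ω i.1 * X ω j.1) := by
      funext ω
      have e1 : W h ω * (∑ i : ↥(Finset.univ : Finset (Fin p)), X ω i.1 * a h i)
          = ∑ i : ↥(Finset.univ : Finset (Fin p)), a h i * (X ω i.1 * W h ω) := by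
        rw [Finset.mul_sum]; exact Finset.sum_congr rfl fun i _ => by ring
      have e2 : (∑ i : ↥(Finset.univ : Finset (Fin p)), X ω i.1 * a h i) * (∑ j : ↥(Finset.univ : Finset (Fin p)), X ω j.1 * a h j)
          = ∑ i : ↥(Finset.univ : Finset (Fin p)), ∑ j : ↥(Finset.univ : Finset (Fin p)), a h i * a h j * (X ω i.1 * X ω j.1) := by
        rw [Finset.sum_mul_sum]
        exact Finset.sum_congr rfl fun i _ => Finset.sum_congr rfl fun j _ => by ring
      have e0 : (W h ω - ∑ i : ↥(Finset.univ : Finset (Fin p)), X ω i.1 * a h i) ^ 2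
          = W h ω ^ 2 - 2 * (W h ω * ∑ i : ↥(Finset.univ : Finset (Fin p)), X ω i.1 * a h i)
            + (∑ i : ↥(Finset.univ : Finset (Fin p)), X ω i.1 * a h i) * (∑ j : ↥(Finset.univ : Finset (Fin p)), X ω j.1 * a h j) := by ring
      rw [e0, e1, e2]
    rw [hpt]
    have intsum1 : Integrable (fun ω => ∑ i : ↥(Finset.univ : Finset (Fin p)), a h i * (X ω i.1 * W h ω)) μ :=
      integrable_finset_sum _ fun i _ => (hXWint h i.1).const_mul _
    have int1 : Integrable (fun ω => W h ω ^ 2 - 2 * ∑ i : ↥(Finset.univ : Finset (Fin p)), a h i * (X ω i.1 * W h ω)) μ :=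
      (hW2int h).sub (intsum1.const_mul 2)
    have int2 : Integrable
        (fun ω => ∑ i : ↥(Finset.univ : Finset (Fin p)), ∑ j : ↥(Finset.univ : Finset (Fin p)), a h i * a h j * (X ω i.1 * X ω j.1)) μ :=
      integrable_finset_sum _ fun i _ => integrable_finset_sum _ fun j _ =>
        (hXXint i.1 j.1).const_mul _
    rw [integral_add int1 int2, integral_sub (hW2int h) (intsum1.const_mul 2),
      integral_const_mul, integral_finset_sum _ (fun i _ => (hXWint h i.1).const_mul _),
      integral_finset_sum _
        (fun i _ => integrable_finset_sum _ fun j _ => (hXXint i.1 j.1).const_mul _)]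
    have v1 : ∑ i : ↥(Finset.univ : Finset (Fin p)), ∫ ω, a h i * (X ω i.1 * W h ω) ∂μ = a h ⬝ᵥ b := by
      simp only [dotProduct]
      exact Finset.sum_congr rfl fun i _ => by rw [integral_const_mul, hXWval h i]
    have v2 : ∑ i : ↥(Finset.univ : Finset (Fin p)), ∫ ω, (∑ j : ↥(Finset.univ : Finset (Fin p)), a h i * a h j * (X ω i.1 * X ω j.1)) ∂μ
        = a h ⬝ᵥ Sg.mulVec (a h) := by
      simp only [dotProduct, Matrix.mulVec, Finset.mul_sum]
      refine Finset.sum_congr rfl fun i _ => ?_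
      rw [integral_finset_sum _ (fun j _ => (hXXint i.1 j.1).const_mul _)]
      refine Finset.sum_congr rfl fun j _ => ?_
      rw [integral_const_mul, ← hSg i j]
      ring
    rw [hW2val h, v1, v2]
    have hSb : Sg.mulVec (a h) = b := by
      rw [haB, Matrix.mulVec_mulVec, Matrix.mul_nonsing_inv _ hdet, Matrix.one_mulVec]
    have hab : a h ⬝ᵥ b = c h * (U h ⬝ᵥ Sg⁻¹.mulVec (U h)) := by
      have hbU : b = Real.sqrt (c h) • U h := rfl
      rw [haB, hbU, Matrix.mulVec_smul, smul_dotProduct, dotProduct_smul,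
        smul_eq_mul, smul_eq_mul, ← mul_assoc, Real.mul_self_sqrt (hc_pos h).le,
        dotProduct_comm]
    rw [hSb, hab]
    ring
  -- the trace computation
  have htrace : (MSIR μ X Y J Finset.univ (invS Finset.univ)).trace
      = ∑ h, c h * (U h ⬝ᵥ Sg⁻¹.mulVec (U h)) := by
    rw [MSIR, Matrix.trace_mul_cycle, (hinvS Finset.univ).2, ← hSgdef, Matrix.mul_sum,
      Matrix.trace_sum]
    refine Finset.sum_congr rfl fun h _ => ?_
    rw [Matrix.mul_smul, Matrix.trace_smul, smul_eq_mul]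
    congr 1
    simp only [Matrix.trace, Matrix.diag, Matrix.mul_apply, Matrix.vecMulVec_apply,
      dotProduct, Matrix.mulVec, Finset.mul_sum]
    exact Finset.sum_congr rfl fun i _ => Finset.sum_congr rfl fun j _ => by ring
  rw [htrace]
  have hsum : ∑ h, ∫ ω, (W h ω - ∑ i : ↥(Finset.univ : Finset (Fin p)), X ω i.1 * a h i) ^ 2 ∂μ
      = ∑ h, ((1 - c h) - c h * (U h ⬝ᵥ Sg⁻¹.mulVec (U h))) :=
    Finset.sum_congr rfl fun h _ => hterm h
  rw [hsum, Finset.sum_sub_distrib]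
  have h1 : ∑ _h : Fin H, (1:ℝ) - ∑ h, c h = (H : ℝ) - 1 := by
    rw [hcsum]; simp
  rw [Finset.sum_sub_distrib, h1]
  ring
end
end
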